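/- arXiv:1706.07475 — 4 statements merged into one kernel-verified Lean document; each statement's English description precedes it below -/
import Mathlib

section
/- Let G be a finite connected graph with a layering partition 𝒯 whose maximum cluster diameter is Δ, and let T_δ be any subtree of 𝒯. Then there exists a connected vertex set S ⊆ V that intersects every cluster of T_δ and satisfies |S| ≤ |T_δ| + Δ·Λ(T_δ), where |T_δ| is the number of clusters of T_δ and Λ(T_δ) is its number of leaves as a rooted tree. -/
open SimpleGraph

variable {V : Type}

/-- `u` and `v` belong to the same cluster of the layering partition of `G`
with start vertex `s`: they are in the same layer (same distance from `s`) and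
are connected by a walk using only vertices in the same or upper layers. -/
def layerRel (G : SimpleGraph V) (s u v : V) : Prop :=
  G.dist s u = G.dist s v ∧
    ∃ w : G.Walk u v, ∀ x ∈ w.support, G.dist s u ≤ G.dist s x

theorem layerRel_refl (G : SimpleGraph V) (s u : V) : layerRel G s u u :=
  ⟨rfl, SimpleGraph.Walk.nil, by simp⟩

theorem layerRel_symm (G : SimpleGraph V) (s : V) : ∀ {u v : V},
    layerRel G s u v → layerRel G s v u := by
  rintro u v ⟨h1, w, hw⟩
  exact ⟨h1.symm, w.reverse, fun x hx => h1 ▸ hw x (by simpa using hx)⟩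

theorem layerRel_trans (G : SimpleGraph V) (s : V) : ∀ {u v w : V},
    layerRel G s u v → layerRel G s v w → layerRel G s u w := by
  rintro u v w ⟨h1, p, hp⟩ ⟨h2, q, hq⟩
  refine ⟨h1.trans h2, p.append q, fun x hx => ?_⟩
  rcases (SimpleGraph.Walk.mem_support_append_iff p q).mp hx with h | h
  · exact hp x h
  · exact h1 ▸ hq x h

/-- The setoid on vertices whose classes are the clusters of the layering partition. -/
def layerSetoid (G : SimpleGraph V) (s : V) : Setoid V :=
  ⟨layerRel G s, ⟨layerRel_refl G s, layerRel_symm G s, layerRel_trans G s⟩⟩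

/-- The clusters of the layering partition of `G` with start vertex `s`. -/
def Cluster (G : SimpleGraph V) (s : V) : Type _ := Quotient (layerSetoid G s)

/-- The cluster containing a vertex. -/
def toCluster (G : SimpleGraph V) (s : V) (v : V) : Cluster G s :=
  Quotient.mk (layerSetoid G s) v

/-- The layering partition 𝒯 seen as a graph on the clusters: two (distinct) clusters are
adjacent iff `G` contains an edge with one endpoint in each.  (This graph is a tree.) -/
def clusterGraph (G : SimpleGraph V) (s : V) : SimpleGraph (Cluster G s) where
  Adj C C' := C ≠ C' ∧ ∃ u v : V, toCluster G s u = C ∧ toCluster G s v = C' ∧ G.Adj u v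
  symm := by
    constructor
    rintro C C' ⟨hne, u, v, hu, hv, ha⟩
    exact ⟨hne.symm, v, u, hv, hu, ha.symm⟩
  loopless := by
    constructor
    rintro C ⟨hne, -⟩
    exact hne rfl

/-- The tree distance `d_𝒯(u,v)` between the clusters containing `u` and `v`. -/
noncomputable def layerDist (G : SimpleGraph V) (s u v : V) : ℕ :=
  (clusterGraph G s).dist (toCluster G s u) (toCluster G s v)

/-- `Δ` is the maximum diameter in `G` of a cluster of the layering partition. -/
def IsMaxClusterDiam (G : SimpleGraph V) (s : V) (Δ : ℕ) : Prop :=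
  IsGreatest {d : ℕ | ∃ u v : V, layerRel G s u v ∧ G.dist u v = d} Δ

/-- `D` is an `(r+φ)`-dominating set of `G`: every vertex `v` is within distance
`r v + φ` of `D`. -/
def IsRPhiDomSet (G : SimpleGraph V) (r : V → ℕ) (φ : ℕ) (D : Set V) : Prop :=
  ∀ v : V, ∃ u ∈ D, G.dist v u ≤ r v + φ

/-- `S` induces a connected subgraph of `G`. -/
def IsConnSet (G : SimpleGraph V) (S : Set V) : Prop := (G.induce S).Connected

/-- `r(C)`, the minimum of `r` over the vertices of the cluster `C`. -/
noncomputable def clusterRadius (G : SimpleGraph V) (s : V) (r : V → ℕ)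
    (C : Cluster G s) : ℕ :=
  sInf (r '' {v : V | toCluster G s v = C})

/-- A subtree of the layering partition 𝒯, i.e. a connected set of clusters. -/
def IsSubtree (G : SimpleGraph V) (s : V) (T' : Set (Cluster G s)) : Prop :=
  ((clusterGraph G s).induce T').Connected

/-- `T'` is an `(r+δ)`-dominating subtree of 𝒯: a subtree such that every cluster `C`
of 𝒯 is within tree-distance `r(C) + δ` of some cluster of `T'`. -/
def IsDomSubtree (G : SimpleGraph V) (s : V) (r : V → ℕ) (δ : ℕ)
    (T' : Set (Cluster G s)) : Prop :=
  IsSubtree G s T' ∧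
    ∀ C : Cluster G s, ∃ C' ∈ T',
      (clusterGraph G s).dist C C' ≤ clusterRadius G s r C + δ

/-- `T'` is a minimum `(r+δ)`-dominating subtree of 𝒯 (fewest clusters). -/
def IsMinDomSubtree (G : SimpleGraph V) (s : V) (r : V → ℕ) (δ : ℕ)
    (T' : Set (Cluster G s)) : Prop :=
  IsDomSubtree G s r δ T' ∧
    ∀ T'' : Set (Cluster G s), IsDomSubtree G s r δ T'' → T'.ncard ≤ T''.ncard

/-- The degree of a cluster `C` inside a set `T'` of clusters. -/
noncomputable def clusterDegree (G : SimpleGraph V) (s : V)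
    (T' : Set (Cluster G s)) (C : Cluster G s) : ℕ :=
  {C' : Cluster G s | C' ∈ T' ∧ (clusterGraph G s).Adj C C'}.ncard

/-- `R` is the root of the subtree `T'` of 𝒯 (with the rooting inherited from 𝒯,
whose root is the cluster `{s}`): the cluster of `T'` closest to the root of 𝒯. -/
def IsRootOf (G : SimpleGraph V) (s : V) (T' : Set (Cluster G s))
    (R : Cluster G s) : Prop :=
  R ∈ T' ∧ ∀ C ∈ T',
    (clusterGraph G s).dist (toCluster G s s) R ≤
      (clusterGraph G s).dist (toCluster G s s) C

/-- `Λ(T')`: the number of leaves of the subtree `T'` rooted at `R`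
(`0` if `T'` is a single node). -/
noncomputable def numLeaves (G : SimpleGraph V) (s : V) (T' : Set (Cluster G s))
    (R : Cluster G s) : ℕ :=
  {C : Cluster G s | C ∈ T' ∧ C ≠ R ∧ clusterDegree G s T' C = 1}.ncard

/-- The eccentricity of a set `S` in `G`: `max_v min_{u ∈ S} d_G(v,u)`. -/
noncomputable def eccSet (G : SimpleGraph V) (S : Set V) : ℕ :=
  sSup (Set.range fun v : V => sInf ((G.dist v) '' S))

section AuxLemmas

open SimpleGraph Walk

variable {W : Type} {H : SimpleGraph W} {S : Set W}

lemma exists_walk_of_induce_reachable {a b : S}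
    (h : (H.induce S).Reachable a b) :
    ∃ w : H.Walk a.1 b.1, ∀ x ∈ w.support, x ∈ S := by
  obtain ⟨p⟩ := h
  induction p with
  | nil => exact ⟨Walk.nil, by simp⟩
  | @cons a c b h p ih =>
      obtain ⟨w, hw⟩ := ih
      have h' : H.Adj a.1 c.1 := h
      refine ⟨Walk.cons h' w, ?_⟩
      intro x hx
      rw [Walk.support_cons, List.mem_cons] at hx
      rcases hx with rfl | hx
      · exact a.2
      · exact hw x hx

lemma induce_reachable_of_walk {u v : W}
    (w : H.Walk u v) (hw : ∀ x ∈ w.support, x ∈ S) (hu : u ∈ S) (hv : v ∈ S) :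
    (H.induce S).Reachable ⟨u, hu⟩ ⟨v, hv⟩ := by
  induction w with
  | nil => rfl
  | @cons a c b h p ih =>
      have hc : c ∈ S := hw c (by simp)
      have h1 : (H.induce S).Adj ⟨a, hu⟩ ⟨c, hc⟩ := by
        simpa using h
      refine (h1.reachable).trans (ih ?_ hc hv)
      intro x hx
      exact hw x (by rw [Walk.support_cons]; exact List.mem_cons_of_mem _ hx)

end AuxLemmas
section ConnLemmas

open SimpleGraph Walk

variable {V : Type} {G : SimpleGraph V} {A B S : Set V}

/-- Auxiliary characterization of connected vertex sets via walks. -/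
def GoodSet (G : SimpleGraph V) (S : Set V) : Prop :=
  S.Nonempty ∧ ∀ u ∈ S, ∀ v ∈ S, ∃ w : G.Walk u v, ∀ x ∈ w.support, x ∈ S

lemma isConnSet_iff_good : IsConnSet G S ↔ GoodSet G S := by
  rw [IsConnSet, connected_iff]
  constructor
  · rintro ⟨hpre, hne⟩
    refine ⟨Set.nonempty_coe_sort.mp hne, fun u hu v hv => ?_⟩
    exact exists_walk_of_induce_reachable (hpre ⟨u, hu⟩ ⟨v, hv⟩)
  · rintro ⟨hne, hwalk⟩
    refine ⟨fun a b => ?_, Set.nonempty_coe_sort.mpr hne⟩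
    obtain ⟨u, hu⟩ := a
    obtain ⟨v, hv⟩ := b
    obtain ⟨w, hw⟩ := hwalk u hu v hv
    exact induce_reachable_of_walk w hw hu hv

lemma goodSet_singleton (v : V) : GoodSet G {v} := by
  refine ⟨⟨v, rfl⟩, ?_⟩
  rintro u rfl w rfl
  exact ⟨Walk.nil, by simp⟩

lemma goodSet_support {u v : V} (w : G.Walk u v) :
    GoodSet G {x | x ∈ w.support} := by
  classical
  refine ⟨⟨u, w.start_mem_support⟩, fun p hp q hq => ?_⟩
  refine ⟨(w.takeUntil p hp).reverse.append (w.takeUntil q hq), fun x hx => ?_⟩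
  rw [Walk.mem_support_append_iff] at hx
  rcases hx with hx | hx
  · rw [Walk.support_reverse, List.mem_reverse] at hx
    exact w.support_takeUntil_subset hp hx
  · exact w.support_takeUntil_subset hq hx

lemma GoodSet.union (hA : GoodSet G A) (hB : GoodSet G B)
    (h : ∃ a ∈ A, ∃ b ∈ B, G.Adj a b ∨ a = b) : GoodSet G (A ∪ B) := by
  obtain ⟨a, ha, b, hb, hab⟩ := h
  -- a walk from a to b within A ∪ B
  have hbridge : ∃ w : G.Walk a b, ∀ x ∈ w.support, x ∈ A ∪ B := by
    rcases hab with hab | rfl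
    · exact ⟨Walk.cons hab Walk.nil, by
        intro x hx; simp at hx
        rcases hx with rfl | rfl
        exacts [Or.inl ha, Or.inr hb]⟩
    · exact ⟨Walk.nil, by intro x hx; simp at hx; subst hx; exact Or.inl ha⟩
  obtain ⟨wab, hwab⟩ := hbridge
  have key : ∀ u ∈ A ∪ B, ∃ w : G.Walk u a, ∀ x ∈ w.support, x ∈ A ∪ B := by
    intro u hu
    rcases hu with hu | hu
    · obtain ⟨w, hw⟩ := hA.2 u hu a ha
      exact ⟨w, fun x hx => Or.inl (hw x hx)⟩
    · obtain ⟨w, hw⟩ := hB.2 u hu b hb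
      exact ⟨w.append wab.reverse, fun x hx => by
        rw [Walk.mem_support_append_iff] at hx
        rcases hx with hx | hx
        · exact Or.inr (hw x hx)
        · rw [Walk.support_reverse, List.mem_reverse] at hx
          exact hwab x hx⟩
  refine ⟨⟨a, Or.inl ha⟩, fun u hu v hv => ?_⟩
  obtain ⟨w1, hw1⟩ := key u hu
  obtain ⟨w2, hw2⟩ := key v hv
  refine ⟨w1.append w2.reverse, fun x hx => ?_⟩
  rw [Walk.mem_support_append_iff] at hx
  rcases hx with hx | hx
  · exact hw1 x hx
  · rw [Walk.support_reverse, List.mem_reverse] at hx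
    exact hw2 x hx

lemma ncard_support_le {u v : V} (w : G.Walk u v) :
    {x | x ∈ w.support}.ncard ≤ w.length + 1 := by
  classical
  have h1 : {x | x ∈ w.support} = ↑(w.support.toFinset) := by
    ext x; simp
  rw [h1, Set.ncard_coe_finset]
  calc w.support.toFinset.card ≤ w.support.length := List.toFinset_card_le _
    _ = w.length + 1 := w.length_support

end ConnLemmas
section ClusterLemmas

open SimpleGraph Walk

variable {V : Type} {G : SimpleGraph V} {s : V}

/-- The layer of a cluster. -/
noncomputable def clayer (G : SimpleGraph V) (s : V) : Cluster G s → ℕ :=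
  Quotient.lift (G.dist s) (fun _ _ h => h.1)

lemma clayer_toCluster (v : V) : clayer G s (toCluster G s v) = G.dist s v := rfl

lemma toCluster_eq_iff {u v : V} :
    toCluster G s u = toCluster G s v ↔ layerRel G s u v :=
  ⟨Quotient.exact, fun h => Quotient.sound h⟩

lemma cluster_exists_rep (C : Cluster G s) : ∃ v : V, toCluster G s v = C :=
  Quotient.exists_rep C

lemma layerRel_of_adj_eq_dist {u v : V} (huv : G.Adj u v)
    (h : G.dist s u = G.dist s v) : layerRel G s u v := by
  refine ⟨h, Walk.cons huv Walk.nil, ?_⟩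
  intro x hx
  simp at hx
  rcases hx with rfl | rfl
  · exact le_refl _
  · exact le_of_eq h

lemma clusterAdj_layer (hconn : G.Connected) {C C' : Cluster G s}
    (h : (clusterGraph G s).Adj C C') :
    clayer G s C' = clayer G s C + 1 ∨ clayer G s C = clayer G s C' + 1 := by
  obtain ⟨hne, u, v, hu, hv, huv⟩ := h
  subst hu; subst hv
  have hd1 : G.dist u v ≤ 1 := le_trans (dist_le (Walk.cons huv Walk.nil)) (by norm_num)
  have h1 : G.dist s v ≤ G.dist s u + 1 :=
    le_trans (hconn.dist_triangle (v := u)) (by omega)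
  have hd2 : G.dist v u ≤ 1 := le_trans (dist_le (Walk.cons huv.symm Walk.nil)) (by norm_num)
  have h2 : G.dist s u ≤ G.dist s v + 1 :=
    le_trans (hconn.dist_triangle (v := v)) (by omega)
  have hned : G.dist s u ≠ G.dist s v := by
    intro he
    exact hne (toCluster_eq_iff.mpr (layerRel_of_adj_eq_dist huv he))
  simp only [clayer_toCluster]
  omega

lemma lift_walk {C C' : Cluster G s} (p : (clusterGraph G s).Walk C C') (m : ℕ)
    (hm : ∀ X ∈ p.support, m ≤ clayer G s X) {u : V} (hu : toCluster G s u = C) :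
    ∃ v : V, toCluster G s v = C' ∧
      ∃ w : G.Walk u v, ∀ x ∈ w.support, m ≤ G.dist s x := by
  induction p generalizing u with
  | nil =>
      refine ⟨u, hu, Walk.nil, ?_⟩
      intro x hx
      simp at hx; subst hx
      have := hm _ (Walk.start_mem_support _)
      rwa [← hu, clayer_toCluster] at this
  | @cons C D C' h q ih =>
      obtain ⟨hne, a, b, ha, hb, hab⟩ := h
      have hrel : layerRel G s u a := toCluster_eq_iff.mp (hu.trans ha.symm)
      obtain ⟨heq, w1, hw1⟩ := hrel
      obtain ⟨v, hv, w2, hw2⟩ := ih (fun X hX => hm X (by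
        exact List.mem_cons_of_mem _ hX)) hb
      have hmu : m ≤ G.dist s u := by
        have := hm C (Walk.start_mem_support _)
        rwa [← hu, clayer_toCluster] at this
      refine ⟨v, hv, w1.append (Walk.cons hab w2), ?_⟩
      intro x hx
      rw [Walk.mem_support_append_iff] at hx
      rcases hx with hx | hx
      · exact le_trans hmu (hw1 x hx)
      · rw [Walk.support_cons, List.mem_cons] at hx
        rcases hx with rfl | hx
        · calc m ≤ G.dist s u := hmu
            _ ≤ G.dist s x := le_of_eq heq
        · exact hw2 x hx

lemma same_layer_eq {C C' : Cluster G s} (p : (clusterGraph G s).Walk C C')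
    (hm : ∀ X ∈ p.support, clayer G s C ≤ clayer G s X)
    (hl : clayer G s C' = clayer G s C) : C = C' := by
  obtain ⟨u, hu⟩ := cluster_exists_rep C
  obtain ⟨v, hv, w, hw⟩ := lift_walk p (clayer G s C) hm hu
  have hdu : G.dist s u = clayer G s C := by rw [← hu, clayer_toCluster]
  have hdv : G.dist s v = clayer G s C := by rw [← hl, ← hv, clayer_toCluster]
  rw [← hu, ← hv]
  exact toCluster_eq_iff.mpr ⟨hdu.trans hdv.symm, w, fun x hx => hdu ▸ hw x hx⟩

lemma exists_down_neighbor (hconn : G.Connected) {v : V} {i : ℕ}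
    (h : G.dist s v = i + 1) : ∃ z : V, G.Adj v z ∧ G.dist s z = i := by
  have hvs : v ≠ s := by
    intro he; subst he; rw [dist_comm, dist_self] at h; omega
  obtain ⟨p, hp⟩ := hconn.exists_walk_length_eq_dist s v
  obtain ⟨z, hadj, q, hq⟩ := Walk.exists_eq_cons_of_ne hvs p.reverse
  have hlq : q.length = i := by
    have := congrArg Walk.length hq
    rw [Walk.length_reverse, hp, Walk.length_cons] at this
    omega
  have h1 : G.dist s z ≤ i := by
    rw [dist_comm]
    exact le_trans (dist_le q) (le_of_eq hlq)
  have h2 : i ≤ G.dist s z := by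
    have hd : G.dist v z ≤ 1 := le_trans (dist_le (Walk.cons hadj Walk.nil)) (by norm_num)
    have := hconn.dist_triangle (u := s) (v := z) (w := v)
    rw [dist_comm (u := z)] at this
    omega
  exact ⟨z, hadj, le_antisymm h1 h2⟩

lemma down_cluster {v z : V} (hadj : G.Adj v z) (hz : G.dist s z + 1 = G.dist s v)
    {C' : Cluster G s} (h : (clusterGraph G s).Adj (toCluster G s v) C')
    (hC' : clayer G s C' + 1 = G.dist s v) :
    toCluster G s z = C' := by
  have hne : toCluster G s z ≠ toCluster G s v := by
    intro he
    have := congrArg (clayer G s) he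
    rw [clayer_toCluster, clayer_toCluster] at this
    omega
  have hadj2 : (clusterGraph G s).Adj (toCluster G s z) (toCluster G s v) :=
    ⟨hne, z, v, rfl, rfl, hadj.symm⟩
  apply same_layer_eq (Walk.cons hadj2 (Walk.cons h Walk.nil))
  · intro X hX
    simp [Walk.support_cons] at hX
    rcases hX with rfl | rfl | rfl
    · exact le_refl _
    · rw [clayer_toCluster, clayer_toCluster]; omega
    · rw [clayer_toCluster]; omega
  · rw [clayer_toCluster]; omega

end ClusterLemmas
section TreeLemmas

open SimpleGraph Walk

variable {V : Type} {G : SimpleGraph V} {s : V}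

lemma exists_clusterWalk (hconn : G.Connected) :
    ∀ (n : ℕ) (v : V), G.dist s v = n →
      ∃ p : (clusterGraph G s).Walk (toCluster G s s) (toCluster G s v),
        p.length ≤ n := by
  intro n
  induction n with
  | zero =>
      intro v hv
      have hsv : s = v := (hconn.dist_eq_zero_iff).mp hv
      subst hsv
      exact ⟨Walk.nil, by simp⟩
  | succ n ih =>
      intro v hv
      obtain ⟨z, hadj, hz⟩ := exists_down_neighbor hconn hv
      obtain ⟨p, hp⟩ := ih z hz
      have hne : toCluster G s z ≠ toCluster G s v := by
        intro he
        have := congrArg (clayer G s) he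
        rw [clayer_toCluster, clayer_toCluster, hz, hv] at this
        omega
      have hA : (clusterGraph G s).Adj (toCluster G s z) (toCluster G s v) :=
        ⟨hne, z, v, rfl, rfl, hadj.symm⟩
      refine ⟨p.append (Walk.cons hA Walk.nil), ?_⟩
      rw [Walk.length_append, Walk.length_cons, Walk.length_nil]
      omega

lemma walk_layer_bound (hconn : G.Connected) {A B : Cluster G s}
    (p : (clusterGraph G s).Walk A B) :
    clayer G s B ≤ clayer G s A + p.length ∧
      clayer G s A ≤ clayer G s B + p.length := by
  induction p with
  | nil => simp
  | @cons A D B h q ih =>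
      rcases clusterAdj_layer hconn h with h1 | h1 <;>
        · rw [Walk.length_cons]
          omega

lemma clusterDist_eq (hconn : G.Connected) (C : Cluster G s) :
    (clusterGraph G s).dist (toCluster G s s) C = clayer G s C := by
  obtain ⟨v, rfl⟩ := cluster_exists_rep C
  obtain ⟨p, hp⟩ := exists_clusterWalk hconn (G.dist s v) v rfl
  have hub : (clusterGraph G s).dist (toCluster G s s) (toCluster G s v) ≤ G.dist s v :=
    le_trans (dist_le p) hp
  obtain ⟨q, hq⟩ := p.reachable.exists_walk_length_eq_dist
  have hlb := (walk_layer_bound hconn q).1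
  rw [hq, clayer_toCluster, clayer_toCluster, dist_self] at hlb
  rw [clayer_toCluster]
  omega

lemma subtree_walk {T : Set (Cluster G s)} (hT : IsSubtree G s T)
    {X Y : Cluster G s} (hX : X ∈ T) (hY : Y ∈ T) :
    ∃ w : (clusterGraph G s).Walk X Y, ∀ Z ∈ w.support, Z ∈ T :=
  exists_walk_of_induce_reachable (hT.preconnected ⟨X, hX⟩ ⟨Y, hY⟩)

lemma min_unique (hconn : G.Connected) {T : Set (Cluster G s)} (hT : IsSubtree G s T)
    {R X : Cluster G s} (hR : R ∈ T)
    (hmin : ∀ C ∈ T, clayer G s R ≤ clayer G s C)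
    (hX : X ∈ T) (hlay : clayer G s X = clayer G s R) : X = R := by
  obtain ⟨w, hw⟩ := subtree_walk hT hX hR
  exact same_layer_eq w (fun Z hZ => hlay ▸ hmin Z (hw Z hZ)) (by omega)

lemma strict_layer (hconn : G.Connected) {T : Set (Cluster G s)} (hT : IsSubtree G s T)
    {R X : Cluster G s} (hR : R ∈ T)
    (hmin : ∀ C ∈ T, clayer G s R ≤ clayer G s C)
    (hX : X ∈ T) (hne : X ≠ R) : clayer G s R < clayer G s X := by
  rcases lt_or_eq_of_le (hmin X hX) with h | h
  · exact h
  · exact absurd (min_unique hconn hT hR hmin hX h.symm) hne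

lemma adj_root_layer (hconn : G.Connected) {T : Set (Cluster G s)} (hT : IsSubtree G s T)
    {R X : Cluster G s} (hR : R ∈ T)
    (hmin : ∀ C ∈ T, clayer G s R ≤ clayer G s C)
    (hX : X ∈ T) (hadj : (clusterGraph G s).Adj R X) :
    clayer G s X = clayer G s R + 1 := by
  rcases clusterAdj_layer hconn hadj with h | h
  · exact h
  · have := hmin X hX; omega

/-- Any subtree with at least two clusters has a leaf. -/
lemma exists_leaf (hconn : G.Connected) [Finite V] {T : Set (Cluster G s)}
    (hT : IsSubtree G s T) {R : Cluster G s} (hR : R ∈ T)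
    (hmin : ∀ C ∈ T, clayer G s R ≤ clayer G s C)
    {Y : Cluster G s} (hY : Y ∈ T) (hYR : Y ≠ R) :
    ∃ X ∈ T, X ≠ R ∧ clusterDegree G s T X = 1 := by
  haveI : Finite (Cluster G s) := Quotient.finite _
  obtain ⟨X, hX, hmax⟩ := Set.exists_max_image T (clayer G s) (Set.toFinite T) ⟨R, hR⟩
  have hXR : X ≠ R := by
    intro he; subst he
    have h1 := strict_layer hconn hT hR hmin hY hYR
    have h2 := hmax Y hY
    omega
  refine ⟨X, hX, hXR, ?_⟩
  -- neighbors of X in T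
  have hne_exists : ∃ P ∈ T, (clusterGraph G s).Adj X P := by
    obtain ⟨w, hw⟩ := subtree_walk hT hX hR
    obtain ⟨D, hadj, q, hq⟩ := Walk.exists_eq_cons_of_ne hXR w
    refine ⟨D, ?_, hadj⟩
    apply hw
    rw [hq, Walk.support_cons]
    exact List.mem_cons_of_mem _ q.start_mem_support
  obtain ⟨P, hP, hPadj⟩ := hne_exists
  have hlayP : ∀ Q ∈ T, (clusterGraph G s).Adj X Q → clayer G s Q + 1 = clayer G s X := by
    intro Q hQ hadj
    rcases clusterAdj_layer hconn hadj with h | h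
    · have := hmax Q hQ; omega
    · omega
  have huniq : ∀ Q ∈ T, (clusterGraph G s).Adj X Q → Q = P := by
    intro Q hQ hadj
    have h1 := hlayP Q hQ hadj
    have h2 := hlayP P hP hPadj
    apply same_layer_eq (Walk.cons hadj.symm (Walk.cons hPadj Walk.nil))
    · intro Z hZ
      simp [Walk.support_cons] at hZ
      rcases hZ with rfl | rfl | rfl
      · exact le_refl _
      · omega
      · omega
    · omega
  rw [clusterDegree]
  rw [Set.ncard_eq_one]
  refine ⟨P, ?_⟩
  ext Q
  simp only [Set.mem_setOf_eq, Set.mem_singleton_iff]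
  constructor
  · rintro ⟨hQ, hadj⟩; exact huniq Q hQ hadj
  · rintro rfl; exact ⟨hP, hPadj⟩

lemma walk_avoid {W : Type} {H : SimpleGraph W} {T : Set W} {r P : W}
    (hP : ∀ X ∈ T, H.Adj r X → X = P) :
    ∀ (n : ℕ) {a b : W} (w : H.Walk a b), w.length ≤ n →
      (∀ x ∈ w.support, x ∈ T) → a ≠ r → b ≠ r →
      ∃ w' : H.Walk a b, ∀ x ∈ w'.support, x ∈ T ∧ x ≠ r := by
  intro n
  induction n with
  | zero =>
      intro a b w hlen hsup ha hb
      cases w with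
      | nil => exact ⟨Walk.nil, by intro y hy; simp at hy; subst hy; exact ⟨hsup _ (by simp), ha⟩⟩
      | cons h q => simp [Walk.length_cons] at hlen
  | succ n ih =>
      intro a b w hlen hsup ha hb
      cases w with
      | nil => exact ⟨Walk.nil, by intro y hy; simp at hy; subst hy; exact ⟨hsup _ (by simp), ha⟩⟩
      | @cons _ c _ h q =>
          by_cases hc : c = r
          · subst hc
            cases q with
            | nil => exact absurd rfl hb
            | @cons _ d _ h2 q2 =>
                have hd : d ∈ T := by
                  apply hsup
                  rw [Walk.support_cons, Walk.support_cons]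
                  exact List.mem_cons_of_mem _ (List.mem_cons_of_mem _ q2.start_mem_support)
                have hdP : d = P := hP d hd h2
                have haP : a = P := hP a (hsup a (by simp)) h.symm
                have had : a = d := haP.trans hdP.symm
                subst had
                have hq2len : q2.length ≤ n := by
                  rw [Walk.length_cons, Walk.length_cons] at hlen
                  omega
                apply ih q2 hq2len ?_ ha hb
                intro x hx
                apply hsup
                rw [Walk.support_cons, Walk.support_cons]
                exact List.mem_cons_of_mem _ (List.mem_cons_of_mem _ hx)
          · have hq : ∀ x ∈ q.support, x ∈ T := by
              intro x hx
              exact hsup x (by rw [Walk.support_cons]; exact List.mem_cons_of_mem _ hx)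
            obtain ⟨q', hq'⟩ := ih q (by rw [Walk.length_cons] at hlen; omega) hq hc hb
            refine ⟨Walk.cons h q', ?_⟩
            intro x hx
            rw [Walk.support_cons, List.mem_cons] at hx
            rcases hx with rfl | hx
            · exact ⟨hsup x (by simp), ha⟩
            · exact hq' x hx

end TreeLemmas

section WalkToRoot

lemma walk_to_root {W : Type} {H : SimpleGraph W} {T T₁ : Set W} {r : W}
    (hrmem : r ∈ T \ T₁)
    (hclose : ∀ C ∈ T₁, ∀ C' ∈ T, C' ≠ r → H.Adj C C' → C' ∈ T₁) :
    ∀ (n : ℕ) (A : W) (q : H.Walk A r), q.length ≤ n →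
      (∀ x ∈ q.support, x ∈ T) → A ∈ T \ T₁ →
      ∃ w' : H.Walk A r, ∀ x ∈ w'.support, x ∈ T \ T₁ := by
  intro n
  induction n with
  | zero =>
      intro A q hlen hsup hA
      cases q with
      | nil => exact ⟨SimpleGraph.Walk.nil, by
          intro y hy; simp at hy; subst hy; exact hA⟩
      | cons h q' => simp [SimpleGraph.Walk.length_cons] at hlen
  | succ n ihn =>
      intro A q hlen hsup hA
      cases q with
      | nil => exact ⟨SimpleGraph.Walk.nil, by
          intro y hy; simp at hy; subst hy; exact hA⟩
      | @cons _ B _ h q' =>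
          by_cases hAr : A = r
          · subst hAr
            exact ⟨SimpleGraph.Walk.nil, by
              intro y hy; simp at hy; subst hy; exact hA⟩
          · have hBT : B ∈ T := hsup B (by
              rw [SimpleGraph.Walk.support_cons]
              exact List.mem_cons_of_mem _ q'.start_mem_support)
            have hBT₂ : B ∈ T \ T₁ := by
              refine ⟨hBT, fun hBT₁ => ?_⟩
              exact hA.2 (hclose B hBT₁ A hA.1 hAr h.symm)
            obtain ⟨w', hw'⟩ := ihn B q'
              (by rw [SimpleGraph.Walk.length_cons] at hlen; omega)
              (fun y hy => hsup y (by
                rw [SimpleGraph.Walk.support_cons]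
                exact List.mem_cons_of_mem _ hy)) hBT₂
            refine ⟨SimpleGraph.Walk.cons h w', ?_⟩
            intro x hx
            rw [SimpleGraph.Walk.support_cons, List.mem_cons] at hx
            rcases hx with rfl | hx
            · exact hA
            · exact hw' x hx

end WalkToRoot
section MainLemma

open SimpleGraph Walk

variable {V : Type} [Finite V] {G : SimpleGraph V} {s : V}

lemma aux_transversal (hconn : G.Connected) (Δ : ℕ)
    (hΔ : ∀ u v : V, layerRel G s u v → G.dist u v ≤ Δ) :
    ∀ (n : ℕ) (T : Set (Cluster G s)), T.ncard ≤ n → IsSubtree G s T →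
      ∀ R : Cluster G s, R ∈ T → (∀ C ∈ T, clayer G s R ≤ clayer G s C) →
      ∃ S : Set V, GoodSet G S ∧
        (∀ C ∈ T, ∃ v ∈ S, toCluster G s v = C) ∧
        S.ncard ≤ T.ncard + Δ * (numLeaves G s T R - 1) := by
  haveI : Finite (Cluster G s) := Quotient.finite _
  intro n
  induction n with
  | zero =>
      intro T hcard hT R hR hmin
      have h1 : 0 < T.ncard := (Set.ncard_pos (Set.toFinite T)).mpr ⟨R, hR⟩
      omega
  | succ n ih =>
      intro T hcard hT R hR hmin
      have hTpos : 0 < T.ncard := (Set.ncard_pos (Set.toFinite T)).mpr ⟨R, hR⟩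
      by_cases hN1 : ∀ C' ∈ T, ¬ (clusterGraph G s).Adj R C'
      · -- T = {R}
        have hTR : ∀ C ∈ T, C = R := by
          intro C hC
          by_contra hne
          obtain ⟨w, hw⟩ := subtree_walk hT hR hC
          obtain ⟨D, hadj, q, hq⟩ := Walk.exists_eq_cons_of_ne (Ne.symm hne) w
          refine hN1 D ?_ hadj
          apply hw
          rw [hq, Walk.support_cons]
          exact List.mem_cons_of_mem _ q.start_mem_support
        obtain ⟨y, hy⟩ := cluster_exists_rep R
        refine ⟨{y}, goodSet_singleton y, ?_, ?_⟩
        · intro C hC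
          exact ⟨y, rfl, hy.trans (hTR C hC).symm⟩
        · rw [Set.ncard_singleton]; omega
      · push_neg at hN1
        obtain ⟨C₁, hC₁T, hadj₁⟩ := hN1
        have hC₁R : C₁ ≠ R := hadj₁.ne'
        have hlayC₁ : clayer G s C₁ = clayer G s R + 1 :=
          adj_root_layer hconn hT hR hmin hC₁T hadj₁
        by_cases hN2 : ∀ C' ∈ T, (clusterGraph G s).Adj R C' → C' = C₁
        · -- CASE 2 : R has a unique neighbor C₁; recurse on T \ {R}
          set T' : Set (Cluster G s) := T \ {R} with hT'def
          have hmemT' : ∀ {C : Cluster G s}, C ∈ T' ↔ C ∈ T ∧ C ≠ R := by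
            intro C; simp [hT'def]
          have hC₁T' : C₁ ∈ T' := hmemT'.mpr ⟨hC₁T, hC₁R⟩
          have hsub' : IsSubtree G s T' := by
            rw [IsSubtree, connected_iff]
            refine ⟨?_, ⟨⟨C₁, hC₁T'⟩⟩⟩
            rintro ⟨X, hX⟩ ⟨Y, hY⟩
            obtain ⟨hXT, hXR⟩ := hmemT'.mp hX
            obtain ⟨hYT, hYR⟩ := hmemT'.mp hY
            obtain ⟨w, hw⟩ := subtree_walk hT hXT hYT
            obtain ⟨w', hw'⟩ := walk_avoid (fun X hX h => hN2 X hX h)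
              w.length w (le_refl _) hw hXR hYR
            exact induce_reachable_of_walk w'
              (fun x hx => hmemT'.mpr (hw' x hx)) hX hY
          have hmin' : ∀ C ∈ T', clayer G s C₁ ≤ clayer G s C := by
            intro C hC
            obtain ⟨hCT, hCR⟩ := hmemT'.mp hC
            have := strict_layer hconn hT hR hmin hCT hCR
            omega
          have hcard' : T'.ncard ≤ n := by
            have : T'.ncard = T.ncard - 1 := Set.ncard_diff_singleton_of_mem hR
            omega
          obtain ⟨S', hgood', hhit', hbound'⟩ := ih T' hcard' hsub' C₁ hC₁T' hmin'
          -- leaves of T' are leaves of T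
          have hleaf : numLeaves G s T' C₁ ≤ numLeaves G s T R := by
            apply Set.ncard_le_ncard ?_ (Set.toFinite _)
            rintro X ⟨hXT', hXC₁, hdeg⟩
            obtain ⟨hXT, hXR⟩ := hmemT'.mp hXT'
            refine ⟨hXT, hXR, ?_⟩
            rw [clusterDegree] at hdeg ⊢
            have hseteq : {C' | C' ∈ T ∧ (clusterGraph G s).Adj X C'} =
                {C' | C' ∈ T' ∧ (clusterGraph G s).Adj X C'} := by
              ext C'
              simp only [Set.mem_setOf_eq]
              constructor
              · rintro ⟨hC'T, hC'adj⟩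
                refine ⟨hmemT'.mpr ⟨hC'T, ?_⟩, hC'adj⟩
                rintro rfl
                exact hXC₁ (hN2 X hXT hC'adj.symm)
              · rintro ⟨hC'T', hC'adj⟩
                exact ⟨(hmemT'.mp hC'T').1, hC'adj⟩
            rw [hseteq]
            exact hdeg
          obtain ⟨y', hy'S, hy'⟩ := hhit' C₁ hC₁T'
          have hdy' : G.dist s y' = clayer G s R + 1 := by
            rw [← clayer_toCluster (G := G) (s := s) y', hy', hlayC₁]
          obtain ⟨z, hzadj, hzdist⟩ := exists_down_neighbor hconn hdy'
          have hzR : toCluster G s z = R := by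
            apply down_cluster hzadj (by omega)
            · rw [hy']; exact hadj₁.symm
            · rw [hdy']
          refine ⟨{z} ∪ S', ?_, ?_, ?_⟩
          · exact (goodSet_singleton z).union hgood'
              ⟨z, rfl, y', hy'S, Or.inl hzadj.symm⟩
          · intro C hC
            by_cases hCR : C = R
            · exact ⟨z, Or.inl rfl, hzR.trans hCR.symm⟩
            · obtain ⟨v, hvS, hv⟩ := hhit' C (hmemT'.mpr ⟨hC, hCR⟩)
              exact ⟨v, Or.inr hvS, hv⟩
          · have h1 : ({z} ∪ S').ncard ≤ 1 + S'.ncard := by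
              refine le_trans (Set.ncard_union_le _ _) ?_
              rw [Set.ncard_singleton]
            have h2 : T'.ncard = T.ncard - 1 := Set.ncard_diff_singleton_of_mem hR
            have h3 : Δ * (numLeaves G s T' C₁ - 1) ≤ Δ * (numLeaves G s T R - 1) :=
              Nat.mul_le_mul_left Δ (by omega)
            omega
        · -- CASE 3 : R has at least two neighbors in T
          push_neg at hN2
          obtain ⟨C₂, hC₂T, hadj₂, hC₂C₁⟩ := hN2
          have hC₂R : C₂ ≠ R := hadj₂.ne'
          have hlayC₂ : clayer G s C₂ = clayer G s R + 1 :=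
            adj_root_layer hconn hT hR hmin hC₂T hadj₂
          set T₁ : Set (Cluster G s) :=
            {C | ∃ w : (clusterGraph G s).Walk C₁ C, ∀ x ∈ w.support, x ∈ T ∧ x ≠ R}
            with hT₁def
          have hC₁T₁ : C₁ ∈ T₁ := by
            refine ⟨Walk.nil, ?_⟩
            intro x hx; simp at hx; subst hx; exact ⟨hC₁T, hC₁R⟩
          have hT₁sub : ∀ C ∈ T₁, C ∈ T ∧ C ≠ R := by
            rintro C ⟨w, hw⟩
            exact hw C w.end_mem_support
          have hclose : ∀ C ∈ T₁, ∀ C' : Cluster G s, C' ∈ T → C' ≠ R →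
              (clusterGraph G s).Adj C C' → C' ∈ T₁ := by
            rintro C ⟨w, hw⟩ C' hC'T hC'R hadj
            refine ⟨w.append (Walk.cons hadj Walk.nil), ?_⟩
            intro x hx
            rw [Walk.mem_support_append_iff] at hx
            rcases hx with hx | hx
            · exact hw x hx
            · simp at hx
              rcases hx with rfl | rfl
              · exact hw x w.end_mem_support
              · exact ⟨hC'T, hC'R⟩
          have honlyC₁ : ∀ X ∈ T₁, (clusterGraph G s).Adj R X → X = C₁ := by
            rintro X ⟨w, hw⟩ hadj
            have hlayX : clayer G s X = clayer G s R + 1 :=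
              adj_root_layer hconn hT hR hmin (hw X w.end_mem_support).1 hadj
            refine (same_layer_eq w ?_ ?_).symm
            · intro Z hZ
              obtain ⟨hZT, hZR⟩ := hw Z hZ
              have := strict_layer hconn hT hR hmin hZT hZR
              omega
            · omega
          have hC₂T₁ : C₂ ∉ T₁ := fun h => hC₂C₁ (honlyC₁ C₂ h hadj₂)
          set T₂ : Set (Cluster G s) := T \ T₁ with hT₂def
          have hRT₂ : R ∈ T₂ := ⟨hR, fun h => (hT₁sub R h).2 rfl⟩
          have hC₂T₂ : C₂ ∈ T₂ := ⟨hC₂T, hC₂T₁⟩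
          -- walks inside T₁ stay in T₁
          have key : ∀ (A B : Cluster G s) (q : (clusterGraph G s).Walk A B),
              A ∈ T₁ → (∀ x ∈ q.support, x ∈ T ∧ x ≠ R) → ∀ x ∈ q.support, x ∈ T₁ := by
            intro A B q
            induction q with
            | nil =>
                intro hA _ x hx
                simp at hx; subst hx; exact hA
            | @cons A B C h q ihq =>
                intro hA hsup x hx
                have hB : B ∈ T₁ := by
                  have hBm := hsup B (by
                    rw [Walk.support_cons]
                    exact List.mem_cons_of_mem _ q.start_mem_support)
                  exact hclose A hA B hBm.1 hBm.2 h
                rw [Walk.support_cons, List.mem_cons] at hx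
                rcases hx with rfl | hx
                · exact hA
                · exact ihq hB (fun y hy => hsup y (by
                    rw [Walk.support_cons]; exact List.mem_cons_of_mem _ hy)) x hx
          have hT₁walk : ∀ C ∈ T₁, ∃ w : (clusterGraph G s).Walk C₁ C,
              ∀ x ∈ w.support, x ∈ T₁ := by
            rintro C ⟨w, hw⟩
            exact ⟨w, key C₁ C w hC₁T₁ hw⟩
          have hsub₁ : IsSubtree G s T₁ := by
            rw [IsSubtree, connected_iff]
            refine ⟨?_, ⟨⟨C₁, hC₁T₁⟩⟩⟩
            rintro ⟨X, hX⟩ ⟨Y, hY⟩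
            obtain ⟨wX, hwX⟩ := hT₁walk X hX
            obtain ⟨wY, hwY⟩ := hT₁walk Y hY
            exact (induce_reachable_of_walk wX hwX hC₁T₁ hX).symm.trans
              (induce_reachable_of_walk wY hwY hC₁T₁ hY)
          have hT₂walk : ∀ C ∈ T₂, ∃ w : (clusterGraph G s).Walk C R,
              ∀ x ∈ w.support, x ∈ T₂ := by
            intro C hC
            obtain ⟨w, hw⟩ := subtree_walk hT hC.1 hR
            rw [hT₂def]
            exact walk_to_root ⟨hR, fun h => (hT₁sub R h).2 rfl⟩
              (fun C hC C' hC' hne hadj => hclose C hC C' hC' hne hadj)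
              w.length C w (le_refl _) hw (hT₂def ▸ hC)
          have hsub₂ : IsSubtree G s T₂ := by
            rw [IsSubtree, connected_iff]
            refine ⟨?_, ⟨⟨R, hRT₂⟩⟩⟩
            rintro ⟨X, hX⟩ ⟨Y, hY⟩
            obtain ⟨wX, hwX⟩ := hT₂walk X hX
            obtain ⟨wY, hwY⟩ := hT₂walk Y hY
            exact (induce_reachable_of_walk wX hwX hX hRT₂).trans
              (induce_reachable_of_walk wY hwY hY hRT₂).symm
          -- roots of the two subtrees
          have hmin₁ : ∀ C ∈ T₁, clayer G s C₁ ≤ clayer G s C := by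
            intro C hC
            obtain ⟨hCT, hCR⟩ := hT₁sub C hC
            have := strict_layer hconn hT hR hmin hCT hCR
            omega
          have hmin₂ : ∀ C ∈ T₂, clayer G s R ≤ clayer G s C :=
            fun C hC => hmin C hC.1
          -- cardinalities
          have hT₁T : T₁ ⊆ T := fun C hC => (hT₁sub C hC).1
          have hsplit : T₁.ncard + T₂.ncard = T.ncard := by
            rw [hT₂def, Set.ncard_diff hT₁T]
            have := Set.ncard_le_ncard hT₁T (Set.toFinite T)
            omega
          have hcard₁ : T₁.ncard ≤ n := by
            have hsub : T₁ ⊆ T \ {R} := fun C hC => by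
              simp only [Set.mem_diff, Set.mem_singleton_iff]
              exact hT₁sub C hC
            have h1 := Set.ncard_le_ncard hsub (Set.toFinite _)
            have h2 : (T \ {R}).ncard = T.ncard - 1 := Set.ncard_diff_singleton_of_mem hR
            omega
          have hcard₂ : T₂.ncard ≤ n := by
            have hsub : T₂ ⊆ T \ {C₁} := fun C hC => by
              simp only [Set.mem_diff, Set.mem_singleton_iff]
              exact ⟨hC.1, fun h => hC.2 (h ▸ hC₁T₁)⟩
            have h1 := Set.ncard_le_ncard hsub (Set.toFinite _)
            have h2 : (T \ {C₁}).ncard = T.ncard - 1 := Set.ncard_diff_singleton_of_mem hC₁T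
            omega
          obtain ⟨S₁, hgood₁, hhit₁, hbound₁⟩ := ih T₁ hcard₁ hsub₁ C₁ hC₁T₁ hmin₁
          obtain ⟨S₂, hgood₂, hhit₂, hbound₂⟩ := ih T₂ hcard₂ hsub₂ R hRT₂ hmin₂
          obtain ⟨y₁, hy₁S, hy₁⟩ := hhit₁ C₁ hC₁T₁
          obtain ⟨y₂, hy₂S, hy₂⟩ := hhit₂ R hRT₂
          -- a vertex z below y₁ lying in R, and a short path from z to y₂
          have hdy₁ : G.dist s y₁ = clayer G s R + 1 := by
            rw [← clayer_toCluster (G := G) (s := s) y₁, hy₁, hlayC₁]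
          obtain ⟨z, hzadj, hzdist⟩ := exists_down_neighbor hconn hdy₁
          have hzR : toCluster G s z = R := by
            apply down_cluster hzadj (by omega)
            · rw [hy₁]; exact hadj₁.symm
            · rw [hdy₁]
          have hrel : layerRel G s z y₂ :=
            toCluster_eq_iff.mp (hzR.trans hy₂.symm)
          have hdzy : G.dist z y₂ ≤ Δ := hΔ z y₂ hrel
          obtain ⟨p, hp⟩ := hconn.exists_walk_length_eq_dist z y₂
          set P : Set V := {x | x ∈ p.support} with hPdef
          refine ⟨(S₁ ∪ P) ∪ S₂, ?_, ?_, ?_⟩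
          · refine GoodSet.union ?_ hgood₂ ⟨y₂, Or.inr p.end_mem_support, y₂, hy₂S, Or.inr rfl⟩
            exact hgood₁.union (goodSet_support p)
              ⟨y₁, hy₁S, z, p.start_mem_support, Or.inl hzadj⟩
          · intro C hC
            by_cases hCT₁ : C ∈ T₁
            · obtain ⟨v, hvS, hv⟩ := hhit₁ C hCT₁
              exact ⟨v, Or.inl (Or.inl hvS), hv⟩
            · obtain ⟨v, hvS, hv⟩ := hhit₂ C ⟨hC, hCT₁⟩
              exact ⟨v, Or.inr hvS, hv⟩
          · -- cardinality bound
            have hPy₂ : y₂ ∈ P := p.end_mem_support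
            have hPcard : (P \ S₂).ncard ≤ Δ := by
              have h1 : P \ S₂ ⊆ P \ {y₂} := fun x hx => ⟨hx.1, by
                simp only [Set.mem_singleton_iff]
                rintro rfl; exact hx.2 hy₂S⟩
              have h2 := Set.ncard_le_ncard h1 (Set.toFinite _)
              have h3 : (P \ {y₂}).ncard = P.ncard - 1 :=
                Set.ncard_diff_singleton_of_mem hPy₂
              have h4 : P.ncard ≤ Δ + 1 := by
                rw [hPdef]
                have := ncard_support_le p
                omega
              omega
            have hStotal : ((S₁ ∪ P) ∪ S₂).ncard ≤ S₁.ncard + (P \ S₂).ncard + S₂.ncard := by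
              have he : (S₁ ∪ P) ∪ S₂ ⊆ (S₁ ∪ (P \ S₂)) ∪ S₂ := by
                intro x hx
                rcases hx with (hx | hx) | hx
                · exact Or.inl (Or.inl hx)
                · by_cases hxS₂ : x ∈ S₂
                  · exact Or.inr hxS₂
                  · exact Or.inl (Or.inr ⟨hx, hxS₂⟩)
                · exact Or.inr hx
              calc ((S₁ ∪ P) ∪ S₂).ncard
                  ≤ ((S₁ ∪ (P \ S₂)) ∪ S₂).ncard := Set.ncard_le_ncard he (Set.toFinite _)
                _ ≤ (S₁ ∪ (P \ S₂)).ncard + S₂.ncard := Set.ncard_union_le _ _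
                _ ≤ S₁.ncard + (P \ S₂).ncard + S₂.ncard := by
                    have := Set.ncard_union_le S₁ (P \ S₂)
                    omega
            -- leaf counting
            set Λ := numLeaves G s T R with hΛdef
            set Λ₁ := numLeaves G s T₁ C₁ with hΛ₁def
            set Λ₂ := numLeaves G s T₂ R with hΛ₂def
            have hdisj : Disjoint T₁ T₂ := Set.disjoint_sdiff_right
            have hΛeq : Λ = {C | C ∈ T ∧ C ≠ R ∧ clusterDegree G s T C = 1}.ncard := rfl
            have hΛ₁eq : Λ₁ = {C | C ∈ T₁ ∧ C ≠ C₁ ∧ clusterDegree G s T₁ C = 1}.ncard := rfl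
            have hΛ₂eq : Λ₂ = {C | C ∈ T₂ ∧ C ≠ R ∧ clusterDegree G s T₂ C = 1}.ncard := rfl

            -- leaves of T₂ are leaves of T
            have hL₂ : {C | C ∈ T₂ ∧ C ≠ R ∧ clusterDegree G s T₂ C = 1} ⊆
                {C | C ∈ T ∧ C ≠ R ∧ clusterDegree G s T C = 1} := by
              rintro X ⟨hXT₂, hXR, hdeg⟩
              refine ⟨hXT₂.1, hXR, ?_⟩
              rw [clusterDegree] at hdeg ⊢
              have hseteq : {C' | C' ∈ T ∧ (clusterGraph G s).Adj X C'} =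
                  {C' | C' ∈ T₂ ∧ (clusterGraph G s).Adj X C'} := by
                ext C'
                simp only [Set.mem_setOf_eq]
                constructor
                · rintro ⟨hC'T, hC'adj⟩
                  refine ⟨⟨hC'T, fun hC'T₁ => ?_⟩, hC'adj⟩
                  exact hXT₂.2 (hclose C' hC'T₁ X hXT₂.1 hXR hC'adj.symm)
                · rintro ⟨hC'T₂, hC'adj⟩
                  exact ⟨hC'T₂.1, hC'adj⟩
              rw [hseteq]; exact hdeg
            -- leaves of T₁ (other than C₁) are leaves of T
            have hL₁ : {C | C ∈ T₁ ∧ C ≠ C₁ ∧ clusterDegree G s T₁ C = 1} ⊆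
                {C | C ∈ T ∧ C ≠ R ∧ clusterDegree G s T C = 1} := by
              rintro X ⟨hXT₁, hXC₁, hdeg⟩
              obtain ⟨hXT, hXR⟩ := hT₁sub X hXT₁
              refine ⟨hXT, hXR, ?_⟩
              rw [clusterDegree] at hdeg ⊢
              have hseteq : {C' | C' ∈ T ∧ (clusterGraph G s).Adj X C'} =
                  {C' | C' ∈ T₁ ∧ (clusterGraph G s).Adj X C'} := by
                ext C'
                simp only [Set.mem_setOf_eq]
                constructor
                · rintro ⟨hC'T, hC'adj⟩
                  refine ⟨?_, hC'adj⟩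
                  by_cases hC'R : C' = R
                  · subst hC'R
                    exact absurd (honlyC₁ X hXT₁ hC'adj.symm) hXC₁
                  · exact hclose X hXT₁ C' hC'T hC'R hC'adj
                · rintro ⟨hC'T₁, hC'adj⟩
                  exact ⟨(hT₁sub C' hC'T₁).1, hC'adj⟩
              rw [hseteq]; exact hdeg
            have hΛ₂pos : 1 ≤ Λ₂ := by
              obtain ⟨X, hXT₂, hXR, hdeg⟩ :=
                exists_leaf hconn hsub₂ hRT₂ hmin₂ hC₂T₂ hC₂R
              have : X ∈ {C | C ∈ T₂ ∧ C ≠ R ∧ clusterDegree G s T₂ C = 1} :=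
                ⟨hXT₂, hXR, hdeg⟩
              have := (Set.ncard_pos (Set.toFinite _)).mpr ⟨X, this⟩
              omega
            have hkey : Λ₁ - 1 + (Λ₂ - 1) + 1 ≤ Λ - 1 := by
              by_cases hΛ₁0 : Λ₁ = 0
              · -- T₁ = {C₁} and C₁ is a leaf of T
                have hT₁single : ∀ X ∈ T₁, X = C₁ := by
                  intro X hX
                  by_contra hne
                  obtain ⟨Y, hYT₁, hYC₁, hdeg⟩ :=
                    exists_leaf hconn hsub₁ hC₁T₁ hmin₁ hX hne
                  have : Y ∈ {C | C ∈ T₁ ∧ C ≠ C₁ ∧ clusterDegree G s T₁ C = 1} :=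
                    ⟨hYT₁, hYC₁, hdeg⟩
                  have := (Set.ncard_pos (Set.toFinite _)).mpr ⟨Y, this⟩
                  omega
                have hC₁leaf : C₁ ∈ {C | C ∈ T ∧ C ≠ R ∧ clusterDegree G s T C = 1} := by
                  refine ⟨hC₁T, hC₁R, ?_⟩
                  rw [clusterDegree, Set.ncard_eq_one]
                  refine ⟨R, ?_⟩
                  ext C'
                  simp only [Set.mem_setOf_eq, Set.mem_singleton_iff]
                  constructor
                  · rintro ⟨hC'T, hC'adj⟩
                    by_contra hC'R
                    have hC'T₁ : C' ∈ T₁ := hclose C₁ hC₁T₁ C' hC'T hC'R hC'adj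
                    exact (clusterGraph G s).irrefl (hT₁single C' hC'T₁ ▸ hC'adj)
                  · rintro rfl
                    exact ⟨hR, hadj₁.symm⟩
                have hsubL : insert C₁ {C | C ∈ T₂ ∧ C ≠ R ∧ clusterDegree G s T₂ C = 1} ⊆
                    {C | C ∈ T ∧ C ≠ R ∧ clusterDegree G s T C = 1} := by
                  intro X hX
                  rcases hX with rfl | hX
                  · exact hC₁leaf
                  · exact hL₂ hX
                have hnotmem : C₁ ∉ {C | C ∈ T₂ ∧ C ≠ R ∧ clusterDegree G s T₂ C = 1} := by
                  intro h
                  exact h.1.2 hC₁T₁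
                have hc1 : (insert C₁ {C | C ∈ T₂ ∧ C ≠ R ∧ clusterDegree G s T₂ C = 1}).ncard
                    = Λ₂ + 1 := by
                  rw [Set.ncard_insert_of_notMem hnotmem (Set.toFinite _), ← hΛ₂eq]
                have := Set.ncard_le_ncard hsubL (Set.toFinite _)
                rw [hc1] at this
                omega
              · have hdisjL : Disjoint
                    {C | C ∈ T₁ ∧ C ≠ C₁ ∧ clusterDegree G s T₁ C = 1}
                    {C | C ∈ T₂ ∧ C ≠ R ∧ clusterDegree G s T₂ C = 1} := by
                  apply Set.disjoint_left.mpr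
                  rintro X ⟨hX1, -, -⟩ ⟨hX2, -, -⟩
                  exact hX2.2 hX1
                have hunion : {C | C ∈ T₁ ∧ C ≠ C₁ ∧ clusterDegree G s T₁ C = 1} ∪
                    {C | C ∈ T₂ ∧ C ≠ R ∧ clusterDegree G s T₂ C = 1} ⊆
                    {C | C ∈ T ∧ C ≠ R ∧ clusterDegree G s T C = 1} := by
                  intro X hX
                  rcases hX with hX | hX
                  · exact hL₁ hX
                  · exact hL₂ hX
                have hc1 := Set.ncard_union_eq hdisjL (Set.toFinite _) (Set.toFinite _)
                have hc2 := Set.ncard_le_ncard hunion (Set.toFinite _)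
                rw [hc1] at hc2
                omega
            have hmul : Δ * (Λ₁ - 1) + Δ * (Λ₂ - 1) + Δ ≤ Δ * (Λ - 1) := by
              have : Λ₁ - 1 + (Λ₂ - 1) + 1 ≤ Λ - 1 := hkey
              calc Δ * (Λ₁ - 1) + Δ * (Λ₂ - 1) + Δ
                  = Δ * ((Λ₁ - 1) + (Λ₂ - 1) + 1) := by ring
                _ ≤ Δ * (Λ - 1) := Nat.mul_le_mul_left Δ this
            omega

end MainLemma
/-- For any subtree `T_δ` of the layering partition 𝒯 of `G`
(maximum cluster diameter `Δ`), rooted as inherited from 𝒯 at `R`, there is a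
connected vertex set `S` intersecting every cluster of `T_δ` with
`|S| ≤ |T_δ| + Δ·Λ(T_δ)`. -/
theorem exists_connected_transversal
    {V : Type} [Fintype V] (G : SimpleGraph V) (hconn : G.Connected)
    (s : V) (Δ : ℕ) (hΔ : IsMaxClusterDiam G s Δ)
    (Tδ : Set (Cluster G s)) (hsub : IsSubtree G s Tδ)
    (R : Cluster G s) (hR : IsRootOf G s Tδ R) :
    ∃ S : Set V, IsConnSet G S ∧
      (∀ C ∈ Tδ, ∃ v ∈ S, toCluster G s v = C) ∧
      S.ncard ≤ Tδ.ncard + Δ * numLeaves G s Tδ R := by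
  have hΔ' : ∀ u v : V, layerRel G s u v → G.dist u v ≤ Δ :=
    fun u v h => hΔ.2 ⟨u, v, h, rfl⟩
  have hmin : ∀ C ∈ Tδ, clayer G s R ≤ clayer G s C := by
    intro C hC
    have := hR.2 C hC
    rwa [clusterDist_eq hconn, clusterDist_eq hconn] at this
  obtain ⟨S, hgood, hhit, hbound⟩ :=
    aux_transversal hconn Δ hΔ' Tδ.ncard Tδ (le_refl _) hsub R hR.1 hmin
  refine ⟨S, isConnSet_iff_good.mpr hgood, hhit, ?_⟩
  have hm : Δ * (numLeaves G s Tδ R - 1) ≤ Δ * numLeaves G s Tδ R :=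
    Nat.mul_le_mul_left Δ (Nat.sub_le _ _)
  omega
end

section
/- Let 𝒯 be a tree-decomposition of a finite connected graph G, r : V → ℕ, B a bag of 𝒯, and let T_B be an r-covering subtree of 𝒯 that contains B and has the minimum number of bags among all such subtrees. If T_B has at least two bags, then for each leaf B' ≠ B of T_B there is a vertex v of G such that B' is the only bag of T_B with d_G(v, B') ≤ r(v). -/
open SimpleGraph

open SimpleGraph

lemma reach_avoid {W : Type} (H : SimpleGraph W) (S : Set W) (x : W) :
    ∀ {a b : ↥S} (p : (H.induce S).Walk a b), (∀ c ∈ p.support, (c : W) ≠ x) →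
      ∀ (ha : (a : W) ∈ S \ {x}) (hb : (b : W) ∈ S \ {x}),
      (H.induce (S \ {x})).Reachable ⟨a, ha⟩ ⟨b, hb⟩ := by
  intro a b p
  induction p with
  | nil => intro _ ha hb; exact Reachable.refl _
  | @cons u c b h q ih =>
    intro hsup ha hb
    have hc : (c : W) ∈ S \ {x} := ⟨c.2, hsup c (by simp [Walk.support_cons])⟩
    have hadj : (H.induce (S \ {x})).Adj ⟨u, ha⟩ ⟨c, hc⟩ := h
    exact (Adj.reachable hadj).trans
      (ih (fun d hd => hsup d (by simp [Walk.support_cons, hd])) hc hb)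

lemma connected_erase {W : Type} (H : SimpleGraph W) (S : Set W)
    (hS : (H.induce S).Connected) (x : W) (hx : x ∈ S)
    (hdeg : {j | j ∈ S ∧ H.Adj x j}.ncard = 1)
    (hnt : (S \ {x}).Nonempty) : (H.induce (S \ {x})).Connected := by
  classical
  obtain ⟨j, hj⟩ := Set.ncard_eq_one.mp hdeg
  rw [SimpleGraph.connected_iff]
  refine ⟨?_, ⟨⟨hnt.choose, hnt.choose_spec⟩⟩⟩
  rintro ⟨a, ha, hax⟩ ⟨b, hb, hbx⟩
  simp only [Set.mem_singleton_iff] at hax hbx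
  obtain ⟨w⟩ := hS.preconnected ⟨a, ha⟩ ⟨b, hb⟩
  obtain ⟨p, hpath⟩ := w.toPath
  have hx' : ∀ c ∈ p.support, (c : W) ≠ x := by
    intro c hcmem hcx
    have hceq : c = (⟨x, hx⟩ : ↥S) := Subtype.ext hcx
    subst hceq
    have hspec := p.take_spec hcmem
    have hnodup : p.support.Nodup := hpath.support_nodup
    have hsup : p.support
        = (p.takeUntil _ hcmem).support ++ (p.dropUntil _ hcmem).support.tail := by
      conv_lhs => rw [← hspec]
      exact Walk.support_append _ _
    rw [hsup] at hnodup
    have hdisj := List.disjoint_of_nodup_append hnodup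
    have hax' : ((⟨x, hx⟩ : ↥S) : W) ≠ ((⟨a, ha⟩ : ↥S) : W) := fun hh => hax hh.symm
    have hbx' : ((⟨x, hx⟩ : ↥S) : W) ≠ ((⟨b, hb⟩ : ↥S) : W) := fun hh => hbx hh.symm
    obtain ⟨u, hadju, humem⟩ :
        ∃ u : ↥S, H.Adj x u ∧ u ∈ (p.takeUntil _ hcmem).support := by
      have hnn : ¬ (p.takeUntil _ hcmem).reverse.Nil :=
        Walk.not_nil_of_ne (fun hh => hax' (congrArg Subtype.val hh))
      obtain ⟨u, h', q', hq'⟩ := Walk.not_nil_iff.mp hnn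
      refine ⟨u, h', ?_⟩
      have : u ∈ (p.takeUntil _ hcmem).reverse.support := by
        rw [hq']; simp [Walk.support_cons]
      rwa [Walk.support_reverse, List.mem_reverse] at this
    obtain ⟨y, hadjy, hymem⟩ :
        ∃ y : ↥S, H.Adj x y ∧ y ∈ (p.dropUntil _ hcmem).support.tail := by
      have hnn : ¬ (p.dropUntil _ hcmem).Nil :=
        Walk.not_nil_of_ne (fun hh => hbx' (congrArg Subtype.val hh))
      obtain ⟨y, h', q', hq'⟩ := Walk.not_nil_iff.mp hnn
      refine ⟨y, h', ?_⟩
      rw [hq']; simp [Walk.support_cons]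
    have hu : (u : W) ∈ {j | j ∈ S ∧ H.Adj x j} := ⟨u.2, hadju⟩
    have hy : (y : W) ∈ {j | j ∈ S ∧ H.Adj x j} := ⟨y.2, hadjy⟩
    rw [hj, Set.mem_singleton_iff] at hu hy
    have huy : u = y := Subtype.ext (hu.trans hy.symm)
    exact hdisj humem (huy ▸ hymem)
  exact reach_avoid H S x p hx' ⟨ha, hax⟩ ⟨hb, hbx⟩


/-- A tree-decomposition of the graph `G`, with bags indexed by `ι`:
a tree on `ι` together with a bag `bag i ⊆ V` for each node such that every vertex
lies in some bag, every edge of `G` has both endpoints in a common bag, and for each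
vertex the bags containing it induce a subtree. -/
structure TreeDecomp {V : Type} (G : SimpleGraph V) (ι : Type) where
  tree : SimpleGraph ι
  isTree : tree.IsTree
  bag : ι → Set V
  covers_vertex : ∀ v : V, ∃ i : ι, v ∈ bag i
  covers_edge : ∀ ⦃u v : V⦄, G.Adj u v → ∃ i : ι, u ∈ bag i ∧ v ∈ bag i
  bags_connected : ∀ v : V, (tree.induce {i : ι | v ∈ bag i}).Connected

variable {V ι : Type}

/-- The tree-decomposition has breadth `ρ`: each bag is contained in the
`ρ`-neighbourhood of some vertex of `G`. -/
def TreeDecomp.HasBreadth {G : SimpleGraph V} (TD : TreeDecomp G ι) (ρ : ℕ) : Prop :=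
  ∀ i : ι, ∃ c : V, ∀ u ∈ TD.bag i, G.dist u c ≤ ρ

/-- The tree-decomposition has length `lam`: any two vertices of a common bag are at
distance at most `lam` in `G`. -/
def TreeDecomp.HasLength {G : SimpleGraph V} (TD : TreeDecomp G ι) (lam : ℕ) : Prop :=
  ∀ i : ι, ∀ u ∈ TD.bag i, ∀ v ∈ TD.bag i, G.dist u v ≤ lam

/-- `G` admits a (finite) tree-decomposition of length `lam`. -/
def HasTDOfLength (G : SimpleGraph V) (lam : ℕ) : Prop :=
  ∃ (ι : Type) (_ : Fintype ι) (TD : TreeDecomp G ι), TD.HasLength lam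

/-- The tree-length of `G` equals `lam`: `lam` is the minimum length over all
tree-decompositions of `G`. -/
def TreeLengthEq (G : SimpleGraph V) (lam : ℕ) : Prop :=
  HasTDOfLength G lam ∧ ∀ lam' : ℕ, HasTDOfLength G lam' → lam ≤ lam'

/-- `T'` is an `(r+φ)`-covering subtree of the tree-decomposition `TD`: a connected
set of bags such that every vertex `v` of `G` is within distance `r v + φ` of some
bag of `T'`. -/
def IsCovSubtree {G : SimpleGraph V} (TD : TreeDecomp G ι) (r : V → ℕ) (φ : ℕ)
    (T' : Set ι) : Prop :=
  (TD.tree.induce T').Connected ∧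
    ∀ v : V, ∃ i ∈ T', ∃ u ∈ TD.bag i, G.dist v u ≤ r v + φ

/-- The degree of the bag `i` inside the subtree `T'` of the decomposition tree. -/
noncomputable def bagDegree {G : SimpleGraph V} (TD : TreeDecomp G ι)
    (T' : Set ι) (i : ι) : ℕ :=
  {j : ι | j ∈ T' ∧ TD.tree.Adj i j}.ncard

/-- Let `T_B` be an `r`-covering subtree of a tree-decomposition of
`G` containing the bag `B` and with the fewest bags among all such subtrees, and
suppose `T_B` has at least two bags.  Then for each leaf `B' ≠ B` of `T_B` there is a
vertex `v` such that `B'` is the only bag of `T_B` with `d_G(v, B') ≤ r(v)`. -/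
theorem leaf_of_min_covering_subtree_private_vertex
    {V ι : Type} [Fintype V] [Fintype ι]
    (G : SimpleGraph V) (hconn : G.Connected) (TD : TreeDecomp G ι)
    (r : V → ℕ) (B : ι) (TB : Set ι)
    (hTB : IsCovSubtree TD r 0 TB) (hBmem : B ∈ TB)
    (hmin : ∀ T'' : Set ι, IsCovSubtree TD r 0 T'' → B ∈ T'' → TB.ncard ≤ T''.ncard)
    (hcard : 1 < TB.ncard) :
    ∀ B' ∈ TB, B' ≠ B → bagDegree TD TB B' = 1 →
      ∃ v : V, (∃ u ∈ TD.bag B', G.dist v u ≤ r v) ∧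
        ∀ j ∈ TB, (∃ u ∈ TD.bag j, G.dist v u ≤ r v) → j = B' := by
  intro B' hB' hne hdeg
  set TB' := TB \ {B'} with hTB'
  have hBmem' : B ∈ TB' := ⟨hBmem, fun h => hne (Set.mem_singleton_iff.mp h).symm⟩
  have hconn' : (TD.tree.induce TB').Connected :=
    connected_erase TD.tree TB hTB.1 B' hB' hdeg ⟨B, hBmem'⟩
  have hlt : TB'.ncard < TB.ncard :=
    Set.ncard_diff_singleton_lt_of_mem hB' (Set.toFinite TB)
  have hnotcov : ¬ IsCovSubtree TD r 0 TB' := fun hcov =>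
    absurd (hmin TB' hcov hBmem') (not_le.mpr hlt)
  rw [IsCovSubtree] at hnotcov
  push_neg at hnotcov
  obtain ⟨v, hv⟩ := hnotcov hconn'
  obtain ⟨i, hiTB, u, hu, hdist⟩ := hTB.2 v
  have hiB' : i = B' := by
    by_contra hiB'
    exact absurd hdist (by simpa using hv i ⟨hiTB, hiB'⟩ u hu)
  subst hiB'
  refine ⟨v, ⟨u, hu, by simpa using hdist⟩, ?_⟩
  intro j hj hjcov
  by_contra hjB'
  obtain ⟨u', hu', hd'⟩ := hjcov
  exact absurd (by simpa using hd') (by simpa using hv j ⟨hj, hjB'⟩ u' hu')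
end

section
/- Let 𝒯 be a tree-decomposition of a finite connected graph G, r : V → ℕ, B a bag of 𝒯, and let T_B be an r-covering subtree of 𝒯 containing B with the minimum number of bags among all such subtrees, where T_B has at least two bags. Then for each leaf B' ≠ B of T_B, there exists a minimum r-covering subtree T_r of 𝒯 (one with the fewest bags among all r-covering subtrees of 𝒯) that contains B'. -/
open SimpleGraph

variable {V ι : Type}

namespace TDaux


variable {ι : Type} {T : SimpleGraph ι}

/-- The unique path between two vertices of a tree. -/
noncomputable def tp (ht : T.IsTree) (i j : ι) : T.Walk i j :=
  (ht.existsUnique_path i j).choose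

lemma tp_isPath (ht : T.IsTree) (i j : ι) : (tp ht i j).IsPath :=
  (ht.existsUnique_path i j).choose_spec.1

lemma tp_eq (ht : T.IsTree) {i j : ι} (p : T.Walk i j) (hp : p.IsPath) :
    p = tp ht i j :=
  (ht.existsUnique_path i j).choose_spec.2 p hp

lemma length_eq_dist (ht : T.IsTree) {i j : ι} (p : T.Walk i j) (hp : p.IsPath) :
    p.length = T.dist i j := by
  obtain ⟨q, hq, hql⟩ := ht.isConnected.exists_path_of_dist i j
  rw [(tp_eq ht p hp).trans (tp_eq ht q hq).symm]
  exact hql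

lemma tp_length (ht : T.IsTree) (i j : ι) : (tp ht i j).length = T.dist i j :=
  length_eq_dist ht _ (tp_isPath ht i j)

/-- Path-closedness from connectivity of the induced subgraph. -/
lemma pc (ht : T.IsTree) {S : Set ι} (hS : (T.induce S).Connected) {i j : ι}
    (hi : i ∈ S) (hj : j ∈ S) : ∀ x ∈ (tp ht i j).support, x ∈ S := by
  classical
  obtain ⟨w⟩ := hS ⟨i, hi⟩ ⟨j, hj⟩
  have hw : ∀ x ∈ (w.map (Embedding.induce S).toHom).support, x ∈ S := by
    intro x hx
    rw [Walk.support_map, List.mem_map] at hx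
    obtain ⟨y, _, rfl⟩ := hx
    exact y.2
  have hb : (w.map (Embedding.induce S).toHom).bypass = tp ht i j :=
    tp_eq ht _ (Walk.bypass_isPath _)
  intro x hx
  apply hw
  apply Walk.support_bypass_subset
  rw [hb]
  exact hx

/-- Connectivity of the induced subgraph from path-closedness. -/
lemma pc_conn (ht : T.IsTree) {S : Set ι} (hne : S.Nonempty)
    (h : ∀ a b : ι, a ∈ S → b ∈ S → ∀ x ∈ (tp ht a b).support, x ∈ S) :
    (T.induce S).Connected := by
  obtain ⟨u, hu⟩ := hne
  apply induce_connected_of_patches u hu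
  intro v hv
  refine ⟨{x | x ∈ (tp ht u v).support}, fun x hx => h u v hu hv x hx,
    Walk.start_mem_support _, Walk.end_mem_support _, ?_⟩
  exact ((tp ht u v).connected_induce_support).preconnected _ _

/-- The path from `i` to `j` lies in the union of the paths through any `b`. -/
lemma mem_tp_append (ht : T.IsTree) (i b j : ι) {x : ι}
    (hx : x ∈ (tp ht i j).support) :
    x ∈ (tp ht i b).support ∨ x ∈ (tp ht b j).support := by
  classical
  have hb := tp_eq ht ((tp ht i b).append (tp ht b j)).bypass (Walk.bypass_isPath _)
  rw [← hb] at hx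
  have := Walk.support_bypass_subset _ hx
  rwa [Walk.mem_support_append_iff] at this

lemma dist_add_of_mem_tp (ht : T.IsTree) {i j y : ι}
    (hy : y ∈ (tp ht i j).support) :
    T.dist i y + T.dist y j = T.dist i j := by
  classical
  have h1 : ((tp ht i j).takeUntil y hy).length = T.dist i y :=
    length_eq_dist ht _ ((tp_isPath ht i j).takeUntil hy)
  have h2 : ((tp ht i j).dropUntil y hy).length = T.dist y j :=
    length_eq_dist ht _ ((tp_isPath ht i j).dropUntil hy)
  have h3 := Walk.take_spec (tp ht i j) hy
  have h4 : (((tp ht i j).takeUntil y hy).append ((tp ht i j).dropUntil y hy)).length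
      = (tp ht i j).length := by rw [h3]
  rw [Walk.length_append, h1, h2, tp_length] at h4
  exact h4

lemma isPath_append {a b c : ι} {p : T.Walk a b} {q : T.Walk b c}
    (hp : p.IsPath) (hq : q.IsPath)
    (h : ∀ x, x ∈ p.support → x ∈ q.support → x = b) : (p.append q).IsPath := by
  rw [Walk.isPath_def, Walk.support_append, List.nodup_append]
  refine ⟨hp.support_nodup, hq.support_nodup.sublist (List.tail_sublist _), ?_⟩
  intro x hxp y hxq hxy
  subst hxy
  have hxq' : x ∈ q.support := List.mem_of_mem_tail hxq
  have hxb := h x hxp hxq'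
  subst hxb
  have := hq.support_nodup
  rw [Walk.support_eq_cons q, List.nodup_cons] at this
  exact this.1 hxq

/-- There is a gate: a first vertex of `S` along any walk ending in `S`. -/
lemma gate_exists (ht : T.IsTree) {S : Set ι} {a c : ι} (w : T.Walk a c)
    (hc : c ∈ S) :
    ∃ x ∈ S, ∃ w1 : T.Walk a x, w1.IsPath ∧ (∀ y ∈ w1.support, y ∈ S → y = x) ∧
      ∀ y ∈ w1.support, y ∈ w.support := by
  classical
  induction w with
  | nil =>
    exact ⟨_, hc, Walk.nil, Walk.IsPath.nil, by simp, by simp⟩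
  | @cons u d e h q ih =>
    by_cases hu : u ∈ S
    · exact ⟨u, hu, Walk.nil, Walk.IsPath.nil, by simp, by simp⟩
    · obtain ⟨x, hx, w1', hpath, hprop, hsub⟩ := ih hc
      refine ⟨x, hx, (Walk.cons h w1').bypass, Walk.bypass_isPath _, ?_, ?_⟩
      · intro y hy hyS
        have := Walk.support_bypass_subset _ hy
        rw [Walk.support_cons, List.mem_cons] at this
        rcases this with rfl | hmem
        · exact absurd hyS hu
        · exact hprop y hmem hyS
      · intro y hy
        have := Walk.support_bypass_subset _ hy
        rw [Walk.support_cons, List.mem_cons] at this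
        rw [Walk.support_cons, List.mem_cons]
        rcases this with rfl | hmem
        · exact Or.inl rfl
        · exact Or.inr (hsub y hmem)

/-- The second vertex of a nontrivial walk stays in `takeUntil` at any vertex other
than the start. -/
lemma getVert_one_mem_takeUntil {a b : ι} (p : T.Walk a b) (y : ι)
    (hy : y ∈ p.support) (hne : y ≠ a) [DecidableEq ι] :
    p.getVert 1 ∈ (p.takeUntil y hy).support := by
  cases p with
  | nil => simp at hy; exact absurd hy hne
  | @cons u d c h q =>
    have hy2 := hy
    rw [Walk.support_cons, List.mem_cons] at hy2
    have hy' : y ∈ q.support := by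
      rcases hy2 with rfl | hmem
      · exact absurd rfl hne
      · exact hmem
    have heq : (Walk.cons h q).takeUntil y hy =
        Walk.cons h (q.takeUntil y hy') := by
      rw [Walk.takeUntil]
      exact dif_neg (Ne.symm hne)
    rw [heq]
    simp [Walk.getVert_cons_succ, Walk.getVert_zero]


section TD
variable {V ι : Type} {G : SimpleGraph V} (TD : TreeDecomp G ι)

/-- Path-closedness of the set of bags containing a fixed vertex. -/
lemma bag_pc {u : V} {i j : ι} (hi : u ∈ TD.bag i) (hj : u ∈ TD.bag j) :
    ∀ x ∈ (tp TD.isTree i j).support, u ∈ TD.bag x :=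
  fun x hx => pc TD.isTree (TD.bags_connected u) hi hj x hx

lemma step_lemma {u : V} {i0 b b' w : ι} (hb : u ∈ TD.bag b) (hb' : u ∈ TD.bag b')
    (hw : w ∉ (tp TD.isTree i0 b).support) (hwu : u ∉ TD.bag w) :
    w ∉ (tp TD.isTree i0 b').support := by
  intro hmem
  rcases mem_tp_append TD.isTree i0 b b' hmem with h | h
  · exact hw h
  · exact hwu (bag_pc TD hb hb' w h)

lemma sep_aux {w i0 : ι} :
    ∀ {u u' : V} (q : G.Walk u u'), (∀ x ∈ q.support, x ∉ TD.bag w) →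
    ∀ b : ι, u ∈ TD.bag b → w ∉ (tp TD.isTree i0 b).support →
    ∀ b' : ι, u' ∈ TD.bag b' → w ∉ (tp TD.isTree i0 b').support := by
  intro u u' q
  induction q with
  | nil =>
    intro hq b hb hw b' hb'
    exact step_lemma TD hb hb' hw (hq _ (Walk.start_mem_support _))
  | @cons x y z h p ih =>
    intro hq b hb hw b' hb'
    obtain ⟨c, hxc, hyc⟩ := TD.covers_edge h
    have hq' : ∀ a ∈ p.support, a ∉ TD.bag w := by
      intro a ha
      exact hq a (by rw [Walk.support_cons]; exact List.mem_cons_of_mem _ ha)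
    have hwc : w ∉ (tp TD.isTree i0 c).support :=
      step_lemma TD hb hxc hw (hq _ (Walk.start_mem_support _))
    exact ih hq' c hyc hwc b' hb'

/-- The separator property: every walk between vertices of bags `i` and `j` meets
every bag on the tree path from `i` to `j`. -/
lemma sep {i j w : ι} (hw : w ∈ (tp TD.isTree i j).support) {u u' : V}
    (q : G.Walk u u') (hu : u ∈ TD.bag i) (hu' : u' ∈ TD.bag j) :
    ∃ x ∈ q.support, x ∈ TD.bag w := by
  by_contra hcon
  push_neg at hcon
  have hwi : w ≠ i := by
    rintro rfl
    exact hcon u (Walk.start_mem_support _) hu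
  have hnil : w ∉ (tp TD.isTree i i).support := by

    have hni : (Walk.nil : (TD.tree).Walk i i) = tp TD.isTree i i :=
      tp_eq TD.isTree _ Walk.IsPath.nil
    rw [← hni]
    simp [hwi]
  exact sep_aux TD q hcon i hu hnil j hu' hw

/-- Path-closedness of `S_v`: the set of bags within distance `R` of `v` is closed
under tree paths. -/
lemma Sv_pc (hGc : G.Connected) (v : V) (R : ℕ) {i j : ι}
    (hi : ∃ u ∈ TD.bag i, G.dist v u ≤ R) (hj : ∃ u ∈ TD.bag j, G.dist v u ≤ R) :
    ∀ w ∈ (tp TD.isTree i j).support, ∃ u ∈ TD.bag w, G.dist v u ≤ R := by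
  classical
  intro w hw
  obtain ⟨ui, hui, hdi⟩ := hi
  obtain ⟨uj, huj, hdj⟩ := hj
  obtain ⟨p1, hp1, hl1⟩ := hGc.exists_path_of_dist ui v
  obtain ⟨p2, hp2, hl2⟩ := hGc.exists_path_of_dist v uj
  obtain ⟨x, hxq, hxw⟩ := sep TD hw (p1.append p2) hui huj
  refine ⟨x, hxw, ?_⟩
  rw [Walk.mem_support_append_iff] at hxq
  rcases hxq with hx1 | hx2
  · have h1 : G.dist x v ≤ (p1.dropUntil x hx1).length := dist_le _
    have h2 : (p1.dropUntil x hx1).length ≤ p1.length := Walk.length_dropUntil_le _ _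
    calc G.dist v x = G.dist x v := dist_comm ..
    _ ≤ p1.length := le_trans h1 h2
    _ = G.dist ui v := hl1
    _ = G.dist v ui := dist_comm ..
    _ ≤ R := hdi
  · have h1 : G.dist v x ≤ (p2.takeUntil x hx2).length := dist_le _
    have h2 : (p2.takeUntil x hx2).length ≤ p2.length := Walk.length_takeUntil_le _ _
    calc G.dist v x ≤ p2.length := le_trans h1 h2
    _ = G.dist v uj := hl2
    _ ≤ R := hdj

end TD

end TDaux

/-- Let `T_B` be an `r`-covering subtree of a tree-decomposition of
`G` containing the bag `B` with the fewest bags among all such subtrees, where `T_B`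
has at least two bags.  Then for each leaf `B' ≠ B` of `T_B` there is a minimum
`r`-covering subtree `T_r` of the decomposition containing `B'`. -/
theorem leaf_of_min_covering_subtree_in_min_covering_subtree
    {V ι : Type} [Fintype V] [Fintype ι]
    (G : SimpleGraph V) (hconn : G.Connected) (TD : TreeDecomp G ι)
    (r : V → ℕ) (B : ι) (TB : Set ι)
    (hTB : IsCovSubtree TD r 0 TB) (hBmem : B ∈ TB)
    (hmin : ∀ T'' : Set ι, IsCovSubtree TD r 0 T'' → B ∈ T'' → TB.ncard ≤ T''.ncard)
    (hcard : 1 < TB.ncard) :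
    ∀ B' ∈ TB, B' ≠ B → bagDegree TD TB B' = 1 →
      ∃ Tr : Set ι, IsCovSubtree TD r 0 Tr ∧
        (∀ T'' : Set ι, IsCovSubtree TD r 0 T'' → Tr.ncard ≤ T''.ncard) ∧
        B' ∈ Tr := by
  classical
  intro B' hB'TB hB'B hdeg
  have ht := TD.isTree
  have hVne : Nonempty V := hconn.nonempty
  set Sv : V → Set ι := fun v => {i | ∃ u ∈ TD.bag i, G.dist v u ≤ r v + 0} with hSv
  -- the whole tree is a covering subtree
  have covUniv : IsCovSubtree TD r 0 Set.univ := by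
    constructor
    · apply TDaux.pc_conn ht
      · exact ⟨B, trivial⟩
      · exact fun a b _ _ x _ => trivial
    · intro v
      obtain ⟨i, hi⟩ := TD.covers_vertex v
      exact ⟨i, trivial, v, hi, by simp [SimpleGraph.dist_self]⟩
  -- a minimum covering subtree exists
  obtain ⟨Tr, hTrCov, hTrMin⟩ : ∃ Tr : Set ι, IsCovSubtree TD r 0 Tr ∧
      ∀ T'' : Set ι, IsCovSubtree TD r 0 T'' → Tr.ncard ≤ T''.ncard := by
    have hNne : (Set.ncard '' {T' : Set ι | IsCovSubtree TD r 0 T'}).Nonempty :=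
      ⟨(Set.univ : Set ι).ncard, Set.univ, covUniv, rfl⟩
    obtain ⟨T', hT', hcard'⟩ := Nat.sInf_mem hNne
    refine ⟨T', hT', fun T'' hT'' => ?_⟩
    rw [hcard']
    exact Nat.sInf_le ⟨T'', hT'', rfl⟩
  by_cases hB'Tr : B' ∈ Tr
  · exact ⟨Tr, hTrCov, hTrMin, hB'Tr⟩
  -- path-closedness of TB
  have hTBpc : ∀ a b : ι, a ∈ TB → b ∈ TB → ∀ x ∈ (TDaux.tp ht a b).support, x ∈ TB :=
    fun a b ha hb => TDaux.pc ht hTB.1 ha hb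
  -- TB \ {B'} is connected, via the degree-one hypothesis
  have hTBdiffconn : (TD.tree.induce (TB \ {B'})).Connected := by
    apply TDaux.pc_conn ht
    · exact ⟨B, hBmem, by simp [Ne.symm hB'B]⟩
    rintro a b ⟨haTB, haB'⟩ ⟨hbTB, hbB'⟩ x hx
    refine ⟨hTBpc a b haTB hbTB x hx, ?_⟩
    simp only [Set.mem_singleton_iff] at haB' hbB' ⊢
    intro hxeq
    -- now x = B' is in the interior of the path from a to b
    set p := TDaux.tp ht a b with hp
    have hppath : p.IsPath := TDaux.tp_isPath ht a b
    have hmem : B' ∈ p.support := by rw [← hxeq]; exact hx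
    have hqnil : ¬ (p.takeUntil B' hmem).reverse.Nil :=
      Walk.not_nil_of_ne (fun h => haB' h.symm)
    have hrnil : ¬ (p.dropUntil B' hmem).Nil :=
      Walk.not_nil_of_ne (fun h => hbB' h.symm)
    set n1 := (p.takeUntil B' hmem).reverse.getVert 1 with hn1
    set n2 := (p.dropUntil B' hmem).getVert 1 with hn2
    have hadj1 : TD.tree.Adj B' n1 := Walk.adj_snd hqnil
    have hadj2 : TD.tree.Adj B' n2 := Walk.adj_snd hrnil
    have hn1mem : n1 ∈ (p.takeUntil B' hmem).support := by
      have h1 := Walk.start_mem_support ((p.takeUntil B' hmem).reverse.tail)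
      rw [Walk.support_tail_of_not_nil _ hqnil] at h1
      have h2 := List.mem_of_mem_tail h1
      rwa [Walk.support_reverse, List.mem_reverse] at h2
    have hn2tail : n2 ∈ (p.dropUntil B' hmem).support.tail := by
      have h1 := Walk.start_mem_support ((p.dropUntil B' hmem).tail)
      rwa [Walk.support_tail_of_not_nil _ hrnil] at h1
    have hsplit : p.support = (p.takeUntil B' hmem).support
        ++ (p.dropUntil B' hmem).support.tail := by
      conv_lhs => rw [← Walk.take_spec p hmem]
      rw [Walk.support_append]
    have hnodup := hppath.support_nodup
    rw [hsplit, List.nodup_append] at hnodup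
    have hne12 : n1 ≠ n2 := fun h => hnodup.2.2 n1 hn1mem n2 hn2tail h
    have hn1TB : n1 ∈ TB :=
      hTBpc a b haTB hbTB n1 (Walk.support_takeUntil_subset p hmem hn1mem)
    have hn2TB : n2 ∈ TB :=
      hTBpc a b haTB hbTB n2
        (Walk.support_dropUntil_subset p hmem (List.mem_of_mem_tail hn2tail))
    have hsub : ({n1, n2} : Set ι) ⊆ {j | j ∈ TB ∧ TD.tree.Adj B' j} := by
      rintro x (rfl | rfl)
      · exact ⟨hn1TB, hadj1⟩
      · exact ⟨hn2TB, hadj2⟩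
    have h2le : 2 ≤ ({j | j ∈ TB ∧ TD.tree.Adj B' j}).ncard := by
      rw [← Set.ncard_pair hne12]
      exact Set.ncard_le_ncard hsub (Set.toFinite _)
    rw [bagDegree] at hdeg
    omega
  -- the critical vertex v* for the leaf B'
  obtain ⟨vstar, hvstarU, hvstarB⟩ :
      ∃ v : V, (∀ i ∈ TB, i ∈ Sv v → i = B') ∧ B' ∈ Sv v := by
    by_contra hcon
    push_neg at hcon
    have hcov : IsCovSubtree TD r 0 (TB \ {B'}) := by
      refine ⟨hTBdiffconn, ?_⟩
      intro v
      by_cases hev : ∃ i, i ∈ TB ∧ i ≠ B' ∧ i ∈ Sv v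
      · obtain ⟨i, h1, h2, h3⟩ := hev
        exact ⟨i, ⟨h1, by simpa using h2⟩, h3⟩
      · exfalso
        push_neg at hev
        have huniq : ∀ i ∈ TB, i ∈ Sv v → i = B' := by
          intro i hi hSi
          by_contra hne
          exact (hev i hi hne) hSi
        have hB'not := hcon v huniq
        obtain ⟨i, hiTB, hicov⟩ := hTB.2 v
        have hiSv : i ∈ Sv v := hicov
        exact hB'not (huniq i hiTB hiSv ▸ hiSv)
    have h1 := hmin _ hcov ⟨hBmem, by simp [Ne.symm hB'B]⟩
    have h2 : (TB \ {B'}).ncard = TB.ncard - 1 :=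
      Set.ncard_diff_singleton_of_mem hB'TB
    omega
  have hTrne : Tr.Nonempty := by
    obtain ⟨i, hi, _⟩ := hTrCov.2 vstar
    exact ⟨i, hi⟩
  rcases lt_or_ge 1 Tr.ncard with hm2 | hm1
  · -- case: the minimum covering subtree has at least two bags; contradiction.
    exfalso
    have hTrpc : ∀ a b : ι, a ∈ Tr → b ∈ Tr → ∀ x ∈ (TDaux.tp ht a b).support, x ∈ Tr :=
      fun a b ha hb => TDaux.pc ht hTrCov.1 ha hb
    obtain ⟨C, hCTr, hCc⟩ := hTrCov.2 vstar
    have hCSv : C ∈ Sv vstar := hCc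
    have hsupp : ∀ x ∈ (TDaux.tp ht B' C).support, x ∈ Sv vstar :=
      TDaux.Sv_pc TD hconn vstar (r vstar + 0) hvstarB hCSv
    obtain ⟨X, hXTr, w1, hw1path, hw1prop, hw1sub⟩ :=
      TDaux.gate_exists ht (TDaux.tp ht B' C) hCTr
    have hXSv : X ∈ Sv vstar := hsupp X (hw1sub X (Walk.end_mem_support _))
    have hXB' : X ≠ B' := fun h => hB'Tr (h ▸ hXTr)
    obtain ⟨Z, hZTr, hZmax⟩ : ∃ Z ∈ Tr, ∀ i ∈ Tr,
        TD.tree.dist X i ≤ TD.tree.dist X Z := by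
      obtain ⟨Z, hZ, hmax⟩ := (Set.toFinite Tr).toFinset.exists_max_image
        (fun i => TD.tree.dist X i) (((Set.toFinite Tr).toFinset_nonempty).mpr hTrne)
      exact ⟨Z, by simpa using hZ, fun i hi => hmax i (by simpa using hi)⟩
    have hZX : Z ≠ X := by
      obtain ⟨y, hyTr, hyX⟩ := Set.exists_ne_of_one_lt_ncard hm2 X
      rintro rfl
      have h1 := hZmax y hyTr
      have h2 := ht.isConnected.pos_dist_of_ne (Ne.symm hyX)
      rw [SimpleGraph.dist_self] at h1
      omega
    have hTrZconn : (TD.tree.induce (Tr \ {Z})).Connected := by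
      apply TDaux.pc_conn ht
      · exact ⟨X, hXTr, by simpa using (Ne.symm hZX)⟩
      rintro a b ⟨haTr, haZ⟩ ⟨hbTr, hbZ⟩ x hx
      refine ⟨hTrpc a b haTr hbTr x hx, ?_⟩
      simp only [Set.mem_singleton_iff] at haZ hbZ ⊢
      intro hxZ
      rcases TDaux.mem_tp_append ht a X b hx with h | h
      · have h' : Z ∈ (TDaux.tp ht a X).support := hxZ ▸ h
        have hadd := TDaux.dist_add_of_mem_tp ht h'
        have hmax := hZmax a haTr
        have hpos : 0 < TD.tree.dist a Z :=
          ht.isConnected.pos_dist_of_ne (fun hh => haZ hh)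
        have e1 : TD.tree.dist X a = TD.tree.dist a X := SimpleGraph.dist_comm
        have e2 : TD.tree.dist X Z = TD.tree.dist Z X := SimpleGraph.dist_comm
        omega
      · have h' : Z ∈ (TDaux.tp ht X b).support := hxZ ▸ h
        have hadd := TDaux.dist_add_of_mem_tp ht h'
        have hmax := hZmax b hbTr
        have hpos : 0 < TD.tree.dist Z b :=
          ht.isConnected.pos_dist_of_ne (fun hh => hbZ hh.symm)
        omega
    have hTrZnc : ¬ ∀ v : V, ∃ i ∈ Tr \ {Z}, i ∈ Sv v := by
      intro hcv
      have hc : IsCovSubtree TD r 0 (Tr \ {Z}) := ⟨hTrZconn, fun v => hcv v⟩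
      have h1 := hTrMin _ hc
      have h2 : (Tr \ {Z}).ncard = Tr.ncard - 1 :=
        Set.ncard_diff_singleton_of_mem hZTr
      omega
    push_neg at hTrZnc
    obtain ⟨vZ, hvZ⟩ := hTrZnc
    have hZuniq : ∀ i ∈ Tr, i ∈ Sv vZ → i = Z := by
      intro i hi hSi
      by_contra hne
      exact hvZ i ⟨hi, by simpa using hne⟩ hSi
    have hZSv : Z ∈ Sv vZ := by
      obtain ⟨i, hiTr, hic⟩ := hTrCov.2 vZ
      have hiSv : i ∈ Sv vZ := hic
      exact hZuniq i hiTr hiSv ▸ hiSv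
    obtain ⟨W, hWTB, hWc⟩ := hTB.2 vZ
    have hWSv : W ∈ Sv vZ := hWc
    have hp2sub : ∀ x ∈ (TDaux.tp ht X Z).support, x ∈ Tr := hTrpc X Z hXTr hZTr
    have hp3sub : ∀ x ∈ (TDaux.tp ht Z W).support, x ∈ Sv vZ :=
      TDaux.Sv_pc TD hconn vZ (r vZ + 0) hZSv hWSv
    have hp3Tr : ∀ x ∈ (TDaux.tp ht Z W).support, x ∈ Tr → x = Z :=
      fun x hx hxTr => hZuniq x hxTr (hp3sub x hx)
    have hq23 : ((TDaux.tp ht X Z).append (TDaux.tp ht Z W)).IsPath := by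
      apply TDaux.isPath_append (TDaux.tp_isPath ht X Z) (TDaux.tp_isPath ht Z W)
      intro x hx2 hx3
      exact hp3Tr x hx3 (hp2sub x hx2)
    have hq : (w1.append ((TDaux.tp ht X Z).append (TDaux.tp ht Z W))).IsPath := by
      apply TDaux.isPath_append hw1path hq23
      intro y hy1 hy23
      rw [Walk.mem_support_append_iff] at hy23
      rcases hy23 with hy2 | hy3
      · exact hw1prop y hy1 (hp2sub y hy2)
      · by_cases hyTr : y ∈ Tr
        · exact hw1prop y hy1 hyTr
        · exfalso
          have hq1path : (w1.dropUntil y hy1).IsPath := hw1path.dropUntil hy1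
          have hq1prop : ∀ x ∈ (w1.dropUntil y hy1).support, x ∈ Tr → x = X :=
            fun x hxm => hw1prop x (Walk.support_dropUntil_subset _ hy1 hxm)
          have hr3path : ((TDaux.tp ht Z W).takeUntil y hy3).reverse.IsPath :=
            ((TDaux.tp_isPath ht Z W).takeUntil hy3).reverse
          have hqq : ((w1.dropUntil y hy1).append (TDaux.tp ht X Z)).IsPath := by
            apply TDaux.isPath_append hq1path (TDaux.tp_isPath ht X Z)
            intro x hx1 hx2
            exact hq1prop x hx1 (hp2sub x hx2)
          have heq1 : (w1.dropUntil y hy1).append (TDaux.tp ht X Z)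
              = TDaux.tp ht y Z := TDaux.tp_eq ht _ hqq
          have heq2 : ((TDaux.tp ht Z W).takeUntil y hy3).reverse
              = TDaux.tp ht y Z := TDaux.tp_eq ht _ hr3path
          have hXmem : X ∈ (TDaux.tp ht y Z).support := by
            rw [← heq1, Walk.mem_support_append_iff]
            exact Or.inl (Walk.end_mem_support _)
          rw [← heq2, Walk.support_reverse, List.mem_reverse] at hXmem
          have hXp3 : X ∈ (TDaux.tp ht Z W).support :=
            Walk.support_takeUntil_subset _ hy3 hXmem
          exact hZX (hp3Tr X hXp3 hXTr).symm
    have heqq : w1.append ((TDaux.tp ht X Z).append (TDaux.tp ht Z W))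
        = TDaux.tp ht B' W := TDaux.tp_eq ht _ hq
    have hXin : X ∈ (TDaux.tp ht B' W).support := by
      rw [← heqq, Walk.mem_support_append_iff]
      exact Or.inl (Walk.end_mem_support _)
    have hXTB : X ∈ TB := hTBpc B' W hB'TB hWTB X hXin
    exact hXB' (hvstarU X hXTB hXSv)
  · -- case: the minimum covering subtree is a single bag.
    have hpos : 0 < Tr.ncard := (Set.ncard_pos (Set.toFinite _)).mpr hTrne
    have hcard1 : Tr.ncard = 1 := le_antisymm hm1 hpos
    obtain ⟨X0, hX0⟩ := Set.ncard_eq_one.mp hcard1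
    have hsing : ∀ v, X0 ∈ Sv v := by
      intro v
      obtain ⟨i, hiTr, hic⟩ := hTrCov.2 v
      rw [hX0, Set.mem_singleton_iff] at hiTr
      exact hiTr ▸ hic
    have descent : ∀ k : ℕ, ∀ X : ι, TD.tree.dist B' X ≤ k →
        (∀ v, X ∈ Sv v) → (∀ v, B' ∈ Sv v) := by
      intro k
      induction k with
      | zero =>
        intro X hd hX
        have hXeq : B' = X :=
          (ht.isConnected.dist_eq_zero_iff).mp (Nat.le_zero.mp hd)
        exact fun v => hXeq ▸ hX v
      | succ k ih =>
        intro X hd hX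
        by_cases hXB' : X = B'
        · exact fun v => hXB' ▸ hX v
        · have hnil : ¬ (TDaux.tp ht B' X).reverse.Nil := Walk.not_nil_of_ne hXB'
          set Y := (TDaux.tp ht B' X).reverse.getVert 1 with hY
          have hadj : TD.tree.Adj X Y := Walk.adj_snd hnil
          have hYmem : Y ∈ (TDaux.tp ht B' X).support := by
            have h1 := Walk.start_mem_support ((TDaux.tp ht B' X).reverse.tail)
            rw [Walk.support_tail_of_not_nil _ hnil] at h1
            have h2 := List.mem_of_mem_tail h1
            rwa [Walk.support_reverse, List.mem_reverse] at h2
          have hYX : Y ≠ X := hadj.ne'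
          have hdY : TD.tree.dist B' Y ≤ k := by
            have hadd := TDaux.dist_add_of_mem_tp ht hYmem
            have h1 : TD.tree.dist Y X = 1 := by
              have hle : TD.tree.dist Y X ≤ 1 :=
                SimpleGraph.dist_le (Walk.cons hadj.symm Walk.nil)
              have hp1 := ht.isConnected.pos_dist_of_ne hYX
              omega
            omega
          apply ih Y hdY
          intro v
          by_contra hYv
          obtain ⟨W, hWTB, hWc⟩ := hTB.2 v
          have hWSv : W ∈ Sv v := hWc
          have hXSv : X ∈ Sv v := hX v
          by_cases hex : ∃ y, y ∈ (TDaux.tp ht B' X).support ∧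
              y ∈ (TDaux.tp ht X W).support ∧ y ≠ X
          · obtain ⟨y, hy1, hy2, hyX⟩ := hex
            have hyrev : y ∈ (TDaux.tp ht B' X).reverse.support := by
              rwa [Walk.support_reverse, List.mem_reverse]
            have hYin : Y ∈ ((TDaux.tp ht B' X).reverse.takeUntil y hyrev).support :=
              TDaux.getVert_one_mem_takeUntil _ y hyrev hyX
            have htake : (TDaux.tp ht B' X).reverse.takeUntil y hyrev
                = TDaux.tp ht X y :=
              TDaux.tp_eq ht _ ((TDaux.tp_isPath ht B' X).reverse.takeUntil hyrev)
            have htake2 : (TDaux.tp ht X W).takeUntil y hy2 = TDaux.tp ht X y :=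
              TDaux.tp_eq ht _ ((TDaux.tp_isPath ht X W).takeUntil hy2)
            have hYtpXW : Y ∈ (TDaux.tp ht X W).support := by
              apply Walk.support_takeUntil_subset _ hy2
              rw [htake2, ← htake]
              exact hYin
            exact hYv (TDaux.Sv_pc TD hconn v (r v + 0) hXSv hWSv Y hYtpXW)
          · push_neg at hex
            have hq : ((TDaux.tp ht B' X).append (TDaux.tp ht X W)).IsPath := by
              apply TDaux.isPath_append (TDaux.tp_isPath ht B' X)
                (TDaux.tp_isPath ht X W)
              intro x hx1 hx2
              exact hex x hx1 hx2
            have heqq : (TDaux.tp ht B' X).append (TDaux.tp ht X W)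
                = TDaux.tp ht B' W := TDaux.tp_eq ht _ hq
            have hXin : X ∈ (TDaux.tp ht B' W).support := by
              rw [← heqq, Walk.mem_support_append_iff]
              exact Or.inl (Walk.end_mem_support _)
            have hXTB : X ∈ TB := hTBpc B' W hB'TB hWTB X hXin
            exact hXB' (hvstarU X hXTB (hX vstar))
    have hB'cov : ∀ v, B' ∈ Sv v :=
      descent (TD.tree.dist B' X0) X0 le_rfl hsing
    refine ⟨{B'}, ⟨?_, fun v => ⟨B', Set.mem_singleton _, hB'cov v⟩⟩, ?_, Set.mem_singleton _⟩
    · apply TDaux.pc_conn ht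
      · exact ⟨B', Set.mem_singleton _⟩
      intro a b ha hb x hx
      rw [Set.mem_singleton_iff] at ha hb ⊢
      have hab : a = b := by rw [ha, hb]
      subst hab
      have hn : (Walk.nil : TD.tree.Walk a a) = TDaux.tp ht a a :=
        TDaux.tp_eq ht _ Walk.IsPath.nil
      rw [← hn] at hx
      simp at hx
      rw [hx]; exact ha
    · intro T'' hT''
      obtain ⟨i, hi, _⟩ := hT''.2 vstar
      rw [Set.ncard_singleton]
      exact (Set.ncard_pos (Set.toFinite _)).mpr ⟨i, hi⟩
end

section
/- Let 𝒯 be a tree-decomposition of length λ of a finite connected graph G, r : V → ℕ, φ a non-negative integer, and let T_φ be a minimum (r+φ)-covering subtree of 𝒯. If C is a connected vertex set of G that contains at least one vertex of each leaf bag of T_φ, then C is an (r + (φ+λ))-dominating set of G. -/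
open SimpleGraph

variable {V ι : Type}

namespace Stmt15Aux

open SimpleGraph

variable {ι : Type}

/-- The restriction of a graph to a vertex set, as a graph on the same vertex type. -/
def rest (T : SimpleGraph ι) (S : Set ι) : SimpleGraph ι where
  Adj i j := T.Adj i j ∧ i ∈ S ∧ j ∈ S
  symm := ⟨fun i j ⟨h, hi, hj⟩ => ⟨h.symm, hj, hi⟩⟩
  loopless := ⟨fun i h => T.loopless.irrefl i h.1⟩

lemma rest_le (T : SimpleGraph ι) (S : Set ι) : rest T S ≤ T := fun _ _ h => h.1

lemma rest_mono (T : SimpleGraph ι) {S S' : Set ι} (h : S ⊆ S') :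
    rest T S ≤ rest T S' := fun _ _ ha => ⟨ha.1, h ha.2.1, h ha.2.2⟩

lemma reach_of_induce {T : SimpleGraph ι} {S : Set ι} (hc : (T.induce S).Connected)
    {a b : ι} (ha : a ∈ S) (hb : b ∈ S) : (rest T S).Reachable a b := by
  have h := hc.preconnected ⟨a, ha⟩ ⟨b, hb⟩
  exact h.map (⟨Subtype.val, fun {x y} hxy => ⟨hxy, x.2, y.2⟩⟩ : T.induce S →g rest T S)

lemma support_mem {T : SimpleGraph ι} {S : Set ι} :
    ∀ {a b : ι} (w : (rest T S).Walk a b), a ∈ S → ∀ x ∈ w.support, x ∈ S := by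
  intro a b w
  induction w with
  | nil =>
    intro ha x hx
    rw [SimpleGraph.Walk.support_nil] at hx
    have hxa := List.mem_singleton.mp hx
    subst hxa
    exact ha
  | cons h p ih =>
    intro ha x hx
    rw [SimpleGraph.Walk.support_cons] at hx
    rcases List.mem_cons.mp hx with rfl | hx
    · exact ha
    · exact ih h.2.2 x hx

lemma reach_transfer {T : SimpleGraph ι} {A B : Set ι} :
    ∀ {a b : ι} (w : (rest T A).Walk a b), (∀ x ∈ w.support, x ∈ B) →
      (rest T B).Reachable a b := by
  intro a b w
  induction w with
  | nil => intro _; exact Reachable.refl _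
  | @cons u v c h p ih =>
    intro hB
    have h1 : (rest T B).Adj u v :=
      ⟨h.1, hB u (by simp), hB v (by simp [SimpleGraph.Walk.support_cons])⟩
    exact h1.reachable.trans (ih fun x hx => hB x (by
      rw [SimpleGraph.Walk.support_cons]; exact List.mem_cons_of_mem _ hx))

lemma nocross {T : SimpleGraph ι} (hT : T.IsAcyclic) {t j1 j2 : ι}
    (h1 : T.Adj t j1) (h2 : T.Adj t j2) (hne : j1 ≠ j2)
    (hr : (rest T {k | k ≠ t}).Reachable j1 j2) : False := by
  classical
  obtain ⟨w⟩ := hr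
  have hsup : ∀ x ∈ w.support, x ≠ t := support_mem w h1.ne'
  have hTe : ∀ e ∈ w.edges, e ∈ T.edgeSet := fun e he =>
    edgeSet_mono (rest_le T _) (w.edges_subset_edgeSet he)
  let w' : T.Walk j1 j2 := w.transfer T hTe
  have hsup' : ∀ x ∈ w'.support, x ≠ t := by
    intro x hx
    rw [SimpleGraph.Walk.support_transfer] at hx
    exact hsup x hx
  let p := w'.toPath
  have hps : ∀ x ∈ (p : T.Walk j1 j2).support, x ≠ t := fun x hx =>
    hsup' x (w'.support_toPath_subset hx)
  have hti : t ∉ (p : T.Walk j1 j2).support := fun h => hps t h rfl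
  let P2 : T.Path t j2 := ⟨SimpleGraph.Walk.cons h1 (p : T.Walk j1 j2), p.2.cons hti⟩
  have heq := hT.path_unique P2 (SimpleGraph.Path.singleton h2)
  have hs2 : t :: (p : T.Walk j1 j2).support = [t, j2] := by
    have hc := congrArg (fun q : T.Path t j2 => (q : T.Walk t j2).support) heq
    simpa [P2, SimpleGraph.Path.singleton] using hc
  injection hs2 with _ hp1
  have h3 := (p : T.Walk j1 j2).support_eq_cons
  rw [hp1] at h3
  injection h3 with h4 _
  exact hne h4.symm

noncomputable def degS (T : SimpleGraph ι) (S : Set ι) (l : ι) : ℕ := {k | k ∈ S ∧ T.Adj l k}.ncard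

lemma leaf_exists [Fintype ι] {T : SimpleGraph ι} (hT : T.IsAcyclic) (n : ℕ) :
    ∀ S : Set ι, S.ncard = n →
      (∀ a ∈ S, ∀ b ∈ S, (rest T S).Reachable a b) →
      ∀ i ∈ S, ∀ j ∈ S, T.Adj i j →
        ∃ l ∈ S, l ≠ i ∧ degS T S l ≤ 1 ∧ (rest T (S \ {i})).Reachable j l := by
  classical
  induction n using Nat.strong_induction_on with
  | _ n IH =>
  intro S hcard hconn i hi j hj hadj
  by_cases hdeg : degS T S j ≤ 1
  · exact ⟨j, hj, hadj.ne', hdeg, Reachable.refl _⟩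
  push_neg at hdeg
  have hjdS : j ∈ S \ {i} := ⟨hj, by simp [hadj.ne']⟩
  -- find a neighbour j' of j in S with j' ≠ i
  obtain ⟨j', hj'mem, hj'ne⟩ :=
    Set.exists_ne_of_one_lt_ncard hdeg i
  obtain ⟨hj'S, hadj'⟩ := hj'mem
  have hj'dS : j' ∈ S \ {i} := ⟨hj'S, by simp [hj'ne]⟩
  set S' := {k | k ∈ S ∧ k ≠ i ∧ (rest T (S \ {i})).Reachable j k} with hS'def
  have hjS' : j ∈ S' := ⟨hj, hadj.ne', Reachable.refl _⟩
  have hj'S' : j' ∈ S' := ⟨hj'S, hj'ne, SimpleGraph.Adj.reachable ⟨hadj', hjdS, hj'dS⟩⟩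
  have hconn' : ∀ a ∈ S', ∀ b ∈ S', (rest T S').Reachable a b := by
    have key : ∀ a ∈ S', (rest T S').Reachable j a := by
      rintro a ⟨haS, hane, ⟨w⟩⟩
      have hsupp : ∀ x ∈ w.support, x ∈ S' := by
        intro x hx
        have hxSd : x ∈ S \ {i} := support_mem w hjdS x hx
        exact ⟨hxSd.1, by simpa using hxSd.2, ⟨w.takeUntil x hx⟩⟩
      exact reach_transfer w hsupp
    exact fun a ha b hb => (key a ha).symm.trans (key b hb)
  have hiS' : i ∉ S' := fun h => h.2.1 rfl
  have hlt : S'.ncard < n := by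
    rw [← hcard]
    exact Set.ncard_lt_ncard ⟨fun k hk => hk.1, fun hsub => hiS' (hsub hi)⟩ (Set.toFinite S)
  obtain ⟨l, hlS', hlnej, hldeg, _⟩ :=
    IH S'.ncard hlt S' rfl hconn' j hjS' j' hj'S' hadj'
  obtain ⟨hlS, hlnei, hlreach⟩ := hlS'
  refine ⟨l, hlS, hlnei, ?_, hlreach⟩
  have hsub : {k | k ∈ S ∧ T.Adj l k} ⊆ {k | k ∈ S' ∧ T.Adj l k} := by
    rintro k ⟨hkS, hkadj⟩
    have hkne : k ≠ i := by
      rintro rfl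
      have hmono : rest T (S \ {k}) ≤ rest T {x | x ≠ k} :=
        rest_mono T (fun x hx => by simpa using hx.2)
      exact nocross hT hadj hkadj.symm (Ne.symm hlnej) (Reachable.mono hmono hlreach)
    refine ⟨⟨hkS, hkne, hlreach.trans (SimpleGraph.Adj.reachable ?_)⟩, hkadj⟩
    exact ⟨hkadj, ⟨hlS, by simp [hlnei]⟩, ⟨hkS, by simp [hkne]⟩⟩
  calc degS T S l ≤ {k | k ∈ S' ∧ T.Adj l k}.ncard :=
        Set.ncard_le_ncard hsub (Set.toFinite _)
    _ ≤ 1 := hldeg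

variable {V : Type} {G : SimpleGraph V}

lemma bag_reach {ι : Type} (TD : TreeDecomp G ι) {t : ι} {x : V} (hx : x ∉ TD.bag t)
    {a b : ι} (ha : x ∈ TD.bag a) (hb : x ∈ TD.bag b) :
    (rest TD.tree {k | k ≠ t}).Reachable a b := by
  have h := reach_of_induce (TD.bags_connected x) ha hb
  refine Reachable.mono (rest_mono _ fun k hk => ?_) h
  intro hkt
  exact hx (show x ∈ TD.bag t from hkt ▸ hk)

lemma walk_bags_reach {ι : Type} (TD : TreeDecomp G ι) {t : ι} :
    ∀ {x y : V} (w : G.Walk x y), (∀ z ∈ w.support, z ∉ TD.bag t) →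
      ∀ {a b : ι}, x ∈ TD.bag a → y ∈ TD.bag b →
        (rest TD.tree {k | k ≠ t}).Reachable a b := by
  intro x y w
  induction w with
  | nil =>
    intro hw a b ha hb
    exact bag_reach TD (hw _ (by simp)) ha hb
  | @cons u v c h p ih =>
    intro hw a b ha hb
    obtain ⟨k, hk1, hk2⟩ := TD.covers_edge h
    have hu : u ∉ TD.bag t := hw u (by simp)
    have r1 := bag_reach TD hu ha hk1
    have r2 := ih (fun z hz => hw z (by
      rw [SimpleGraph.Walk.support_cons]; exact List.mem_cons_of_mem _ hz)) hk2 hb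
    exact r1.trans r2

end Stmt15Aux

/-- Let `T_φ` be a minimum `(r+φ)`-covering subtree of a
tree-decomposition of length `lam` of `G`.  If `C` is a connected vertex set
containing at least one vertex of each leaf bag of `T_φ`, then `C` is an
`(r + (φ+lam))`-dominating set of `G`. -/
theorem connected_leaf_transversal_dominates
    {V ι : Type} [Fintype V] [Fintype ι]
    (G : SimpleGraph V) (hconn : G.Connected) (TD : TreeDecomp G ι)
    (lam : ℕ) (hlam : TD.HasLength lam) (r : V → ℕ) (φ : ℕ)
    (Tφ : Set ι) (hTφ : IsCovSubtree TD r φ Tφ)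
    (hmin : ∀ T'' : Set ι, IsCovSubtree TD r φ T'' → Tφ.ncard ≤ T''.ncard)
    (C : Set V) (hC : IsConnSet G C)
    (hleaf : ∀ i ∈ Tφ, bagDegree TD Tφ i ≤ 1 → (C ∩ TD.bag i).Nonempty) :
    IsRPhiDomSet G r (φ + lam) C := by
  classical
  open Stmt15Aux in
  intro v
  obtain ⟨i, hiT, u, hu, hdist⟩ := hTφ.2 v
  suffices h : ∃ c ∈ C, c ∈ TD.bag i by
    obtain ⟨c, hcC, hcb⟩ := h
    refine ⟨c, hcC, ?_⟩
    calc G.dist v c ≤ G.dist v u + G.dist u c := hconn.dist_triangle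
      _ ≤ (r v + φ) + lam := add_le_add hdist (hlam i u hu c hcb)
      _ = r v + (φ + lam) := by ring
  by_cases hdeg : bagDegree TD Tφ i ≤ 1
  · obtain ⟨c, hcC, hcb⟩ := hleaf i hiT hdeg
    exact ⟨c, hcC, hcb⟩
  push_neg at hdeg
  have hdeg' : 1 < Set.ncard {j | j ∈ Tφ ∧ TD.tree.Adj i j} := hdeg
  obtain ⟨j1, hj1, j2, hj2, hne⟩ := (Set.one_lt_ncard (Set.toFinite _)).mp hdeg'
  have hconnT : ∀ a ∈ Tφ, ∀ b ∈ Tφ, (rest TD.tree Tφ).Reachable a b :=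
    fun a ha b hb => reach_of_induce hTφ.1 ha hb
  have hacyc := TD.isTree.2
  obtain ⟨l1, hl1T, hl1ne, hl1deg, hl1r⟩ :=
    leaf_exists hacyc Tφ.ncard Tφ rfl hconnT i hiT j1 hj1.1 hj1.2
  obtain ⟨l2, hl2T, hl2ne, hl2deg, hl2r⟩ :=
    leaf_exists hacyc Tφ.ncard Tφ rfl hconnT i hiT j2 hj2.1 hj2.2
  obtain ⟨c1, hc1C, hc1b⟩ := hleaf l1 hl1T hl1deg
  obtain ⟨c2, hc2C, hc2b⟩ := hleaf l2 hl2T hl2deg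
  obtain ⟨w⟩ := reach_of_induce hC hc1C hc2C
  have hsupC : ∀ x ∈ w.support, x ∈ C := support_mem w hc1C
  have hWedges : ∀ e ∈ w.edges, e ∈ G.edgeSet := fun e he =>
    SimpleGraph.edgeSet_mono (rest_le G C) (w.edges_subset_edgeSet he)
  let wG : G.Walk c1 c2 := w.transfer G hWedges
  by_contra hno
  push_neg at hno
  have havoid : ∀ z ∈ wG.support, z ∉ TD.bag i := by
    intro z hz
    rw [SimpleGraph.Walk.support_transfer] at hz
    exact hno z (hsupC z hz)
  have hr := walk_bags_reach TD wG havoid hc1b hc2b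
  have m : rest TD.tree (Tφ \ {i}) ≤ rest TD.tree {k | k ≠ i} :=
    rest_mono _ (fun x hx => by simpa using hx.2)
  exact nocross hacyc hj1.2 hj2.2 hne
    ((SimpleGraph.Reachable.mono m hl1r).trans (hr.trans (SimpleGraph.Reachable.mono m hl2r).symm))
end
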